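/- arXiv:1202.2566 — 6 statements merged into one kernel-verified Lean document; each statement's English description precedes it below -/
import Mathlib

section
/- Let m ≥ 2 be an integer and let G be a finite abelian group whose exponent divides m. Then for any non-empty subset A ⊆ G and any subset S ⊆ G that generates G, one has ∂_S(A) ≥ (e/m)·|A|·ln(|G|/|A|), where e is Euler's number. -/
/-- Distance from `x` to the nearest integer: `‖x‖`. -/
noncomputable def nearestIntDist (x : ℝ) : ℝ := |x - (round x : ℝ)|

/-- The generalized Takagi function
`ω_m(x) = ∑_{k=0}^∞ m^{-k} ‖m^k x‖_{1/m}`, where `‖·‖_α = min{‖·‖, α}`. -/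
noncomputable def omegaT (m : ℕ) (x : ℝ) : ℝ :=
  ∑' k : ℕ, ((m : ℝ) ^ k)⁻¹ * min (nearestIntDist ((m : ℝ) ^ k * x)) (1 / m)

/-- The directed edge boundary `∂_S(A) = |{(a,s) ∈ A × S : a + s ∉ A}|`. -/
def edgeBoundary {G : Type*} [AddCommGroup G] [Fintype G] [DecidableEq G]
    (S A : Finset G) : ℕ :=
  ((A ×ˢ S).filter fun p => p.1 + p.2 ∉ A).card


lemma elog_le {u : ℝ} (hu : 0 < u) : Real.exp 1 * Real.log u ≤ u := by
  have h : Real.log (u / Real.exp 1) ≤ u / Real.exp 1 - 1 :=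
    Real.log_le_sub_one_of_pos (by positivity)
  rw [Real.log_div (ne_of_gt hu) (by positivity), Real.log_exp] at h
  have he : (0:ℝ) < Real.exp 1 := Real.exp_pos 1
  rw [mul_comm, ← le_div_iff₀ he]
  linarith

-- e * ln 2 ≤ 2
lemma elog2 : Real.exp 1 * Real.log 2 ≤ 2 := by
  nlinarith [Real.exp_one_lt_d9, Real.log_two_lt_d9, Real.exp_pos 1, Real.log_pos (by norm_num : (1:ℝ) < 2)]

-- convexity of exp: exp(-2x ln 2) ≤ 1 - x for x ∈ [0,1/2]
lemma exp_bound {x : ℝ} (hx0 : 0 ≤ x) (hx1 : x ≤ 1/2) :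
    Real.exp (-(2 * x * Real.log 2)) ≤ 1 - x := by
  have h := convexOn_exp.2 (Set.mem_univ (0:ℝ)) (Set.mem_univ (-Real.log 2))
    (by linarith : (0:ℝ) ≤ 1 - 2*x) (by linarith : (0:ℝ) ≤ 2*x) (by ring)
  simp only [smul_eq_mul, mul_zero, zero_add, Real.exp_zero] at h
  have : Real.exp (-Real.log 2) = 1/2 := by
    rw [Real.exp_neg, Real.exp_log]; · norm_num
    · norm_num
  rw [this] at h
  calc Real.exp (-(2 * x * Real.log 2)) = Real.exp (2*x * -Real.log 2) := by ring_nf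
    _ ≤ (1 - 2*x) * 1 + 2*x * (1/2) := h
    _ = 1 - x := by ring

lemma L1 {u : ℝ} (hu : 1 ≤ u) (h2 : Real.exp 1 * Real.log u ≤ 2) :
    Real.exp 1 * (u * Real.log u) ≤ 4 * (u - 1) := by
  set x := Real.exp 1 * Real.log u / 4 with hxdef
  have hlogu : 0 ≤ Real.log u := Real.log_nonneg hu
  have he : (0:ℝ) < Real.exp 1 := Real.exp_pos 1
  have hx0 : 0 ≤ x := by positivity
  have hx1 : x ≤ 1/2 := by rw [hxdef]; linarith
  -- u ≥ 1/(1-x):  u = exp(log u) = exp(4x/e) ≥ exp(2 x log 2) ≥ 1/(1-x)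
  have hkey : Real.exp (2 * x * Real.log 2) ≤ u := by
    have h1 : 2 * x * Real.log 2 ≤ Real.log u := by
      have := mul_le_mul_of_nonneg_left elog2 hlogu
      rw [hxdef]; nlinarith
    calc Real.exp (2*x*Real.log 2) ≤ Real.exp (Real.log u) := Real.exp_le_exp.2 h1
      _ = u := Real.exp_log (by linarith)
  have hexpinv : 1 - x ≥ Real.exp (-(2 * x * Real.log 2)) := exp_bound hx0 hx1
  have hprod : u * (1 - x) ≥ 1 := by
    have h3 : Real.exp (2*x*Real.log 2) * Real.exp (-(2*x*Real.log 2)) = 1 := by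
      rw [← Real.exp_add]; ring_nf; exact Real.exp_zero
    have hpos : 0 < Real.exp (-(2*x*Real.log 2)) := Real.exp_pos _
    nlinarith [hkey, hexpinv, Real.exp_pos (2*x*Real.log 2)]
  have : 4 * (u * (1 - x)) ≥ 4 := by linarith
  have hxu : u * x = Real.exp 1 * (u * Real.log u) / 4 := by rw [hxdef]; ring
  nlinarith [this]

lemma Lstar {u v : ℝ} (hu : 1 ≤ u) (hv0 : 0 ≤ v) (hv1 : v ≤ 1) :
    Real.exp 1 * ((1 - v) * (u * Real.log u)) ≤ (u - v)^2 := by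
  have hlogu : 0 ≤ Real.log u := Real.log_nonneg hu
  have he : (0:ℝ) < Real.exp 1 := Real.exp_pos 1
  set K := Real.exp 1 * (u * Real.log u) with hK
  have hK0 : 0 ≤ K := by positivity
  have goal_eq : Real.exp 1 * ((1 - v) * (u * Real.log u)) = K * (1 - v) := by rw [hK]; ring
  rw [goal_eq]
  rcases le_or_gt (Real.exp 1 * Real.log u) 2 with hc | hc
  · have h4 : K ≤ 4 * (u - 1) := L1 hu hc
    nlinarith [sq_nonneg (v - u + K/2)]
  · have h2u : 2 * u ≤ K := by
      rw [hK]; nlinarith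
    have hKu : K ≤ u^2 := by
      have := elog_le (show (0:ℝ) < u by linarith)
      rw [hK]; nlinarith
    nlinarith [mul_nonneg hv0 (by linarith : (0:ℝ) ≤ K - 2*u), sq_nonneg v]

lemma chord {u v x : ℝ} (h0 : 0 ≤ v) (hvx : v ≤ x) (hxu : x ≤ u) (hlt : v < u) :
    (u - v) * (x * Real.log x) ≤ (u - x) * (v * Real.log v) + (x - v) * (u * Real.log u) := by
  have huv : 0 < u - v := by linarith
  have ha : 0 ≤ (u - x) / (u - v) := div_nonneg (by linarith) (by linarith)
  have hb : 0 ≤ (x - v) / (u - v) := div_nonneg (by linarith) (by linarith)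
  have hab : (u - x)/(u - v) + (x - v)/(u - v) = 1 := by field_simp; ring
  have h := Real.convexOn_mul_log.2 (Set.mem_Ici.2 h0)
    (Set.mem_Ici.2 (le_trans h0 (le_trans hvx hxu))) ha hb hab
  simp only [smul_eq_mul] at h
  have hx : (u - x)/(u - v) * v + (x - v)/(u - v) * u = x := by field_simp; ring
  rw [hx] at h
  rw [div_mul_eq_mul_div, div_mul_eq_mul_div, ← add_div, le_div_iff₀ huv] at h
  linarith

lemma MAL {d : ℕ} (hd : 0 < d) (c : ℕ → ℝ) (a M μ : ℝ)
    (hbounds : ∀ t ∈ Finset.Icc 1 d, μ ≤ c t ∧ c t ≤ M) (hμ0 : 0 ≤ μ)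
    (hsum : ∑ t ∈ Finset.Icc 1 d, c t = a) (ha : 0 < a) :
    ∑ t ∈ Finset.Icc 1 d, c t * Real.log (d * c t / a) ≤ d / Real.exp 1 * (M - μ) := by
  have hcard : (Finset.Icc 1 d).card = d := by rw [Nat.card_Icc]; omega
  have hdR : (0:ℝ) < d := by exact_mod_cast hd
  have he : (0:ℝ) < Real.exp 1 := Real.exp_pos 1
  have h1 : Finset.Nonempty (Finset.Icc 1 d) := by rw [Finset.nonempty_Icc]; omega
  have hμM : μ ≤ M := by
    obtain ⟨t, ht⟩ := h1
    exact le_trans (hbounds t ht).1 (hbounds t ht).2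
  have haM : a ≤ d * M := by
    rw [← hsum]
    calc ∑ t ∈ Finset.Icc 1 d, c t ≤ ∑ t ∈ Finset.Icc 1 d, M :=
          Finset.sum_le_sum (fun t ht => (hbounds t ht).2)
      _ = d * M := by rw [Finset.sum_const, hcard]; simp [mul_comm]
  have haμ : d * μ ≤ a := by
    rw [← hsum]
    calc (d:ℝ) * μ = ∑ _t ∈ Finset.Icc 1 d, μ := by rw [Finset.sum_const, hcard]; simp [mul_comm]
      _ ≤ ∑ t ∈ Finset.Icc 1 d, c t := Finset.sum_le_sum (fun t ht => (hbounds t ht).1)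
  rcases eq_or_lt_of_le hμM with heq | hlt
  · -- all c t equal μ = M > 0, each term log 1 = 0
    have hμpos : 0 < μ := by
      by_contra h
      push_neg at h
      have hM0 : M = 0 := by rw [← heq]; exact le_antisymm h hμ0
      rw [hM0, mul_zero] at haM
      linarith
    have hall : ∀ t ∈ Finset.Icc 1 d, c t = μ := fun t ht =>
      le_antisymm (heq ▸ (hbounds t ht).2) (hbounds t ht).1
    have hsum' : a = d * μ := by
      rw [← hsum, Finset.sum_congr rfl hall, Finset.sum_const, hcard, nsmul_eq_mul]
    have hz : ∀ t ∈ Finset.Icc 1 d, c t * Real.log (d * c t / a) = 0 := by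
      intro t ht
      rw [hall t ht, hsum', div_self (by positivity), Real.log_one, mul_zero]
    rw [Finset.sum_congr rfl hz, Finset.sum_const, ← heq, smul_zero]
    simp
  · -- main case
    set u := d * M / a with hu
    set v := d * μ / a with hv
    have hu1 : 1 ≤ u := by rw [hu, le_div_iff₀ ha]; linarith
    have hv1 : v ≤ 1 := by rw [hv, div_le_one ha]; linarith
    have hv0 : 0 ≤ v := by positivity
    have hvu : v < u := by
      rw [hu, hv]
      apply div_lt_div_of_pos_right _ ha
      · nlinarith
    have huv : (0:ℝ) < u - v := by linarith
    have hd0 : (d:ℝ) ≠ 0 := ne_of_gt hdR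
    have hsumx : ∑ t ∈ Finset.Icc 1 d, (d * c t / a) = d := by
      rw [← Finset.sum_div, ← Finset.mul_sum, hsum]
      field_simp
    have hterm : ∀ t ∈ Finset.Icc 1 d,
        (u - v) * (c t * Real.log (d * c t / a))
        ≤ (a/d) * ((u - (d * c t / a)) * (v * Real.log v)
            + ((d * c t / a) - v) * (u * Real.log u)) := by
      intro t ht
      have hxtv : v ≤ d * c t / a := by
        rw [hv]; gcongr; exact (hbounds t ht).1
      have hxtu : d * c t / a ≤ u := by
        rw [hu]; gcongr; exact (hbounds t ht).2
      have hch := chord hv0 hxtv hxtu hvu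
      have had : 0 < a / d := by positivity
      have heq : (u - v) * (c t * Real.log (d * c t / a))
          = (a/d) * ((u - v) * ((d * c t / a) * Real.log (d * c t / a))) := by
        field_simp
      rw [heq]
      exact mul_le_mul_of_nonneg_left hch (le_of_lt had)
    have expand : ∑ t ∈ Finset.Icc 1 d, ((u - (d * c t / a)) * (v * Real.log v)
          + ((d * c t / a) - v) * (u * Real.log u))
        = (d*(u-1)) * (v * Real.log v) + (d*(1-v)) * (u * Real.log u) := by
      have hre : ∀ t, (u - (d * c t / a)) * (v * Real.log v)
          + ((d * c t / a) - v) * (u * Real.log u)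
          = (u * (v * Real.log v) - v * (u * Real.log u))
            + (d * c t / a) * (u * Real.log u - v * Real.log v) := by
        intro t; ring
      simp_rw [hre]
      rw [Finset.sum_add_distrib, Finset.sum_const, hcard, ← Finset.sum_mul, hsumx,
        nsmul_eq_mul]
      ring
    have key : (u - v) * ∑ t ∈ Finset.Icc 1 d, c t * Real.log (d * c t / a)
        ≤ a * ((v * Real.log v) * (u - 1)) + a * ((u * Real.log u) * (1 - v)) := by
      rw [Finset.mul_sum]
      calc ∑ t ∈ Finset.Icc 1 d, (u - v) * (c t * Real.log (d * c t / a))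
          ≤ ∑ t ∈ Finset.Icc 1 d, (a/d) * ((u - (d * c t / a)) * (v * Real.log v)
              + ((d * c t / a) - v) * (u * Real.log u)) := Finset.sum_le_sum hterm
        _ = (a/d) * ∑ t ∈ Finset.Icc 1 d, ((u - (d * c t / a)) * (v * Real.log v)
              + ((d * c t / a) - v) * (u * Real.log u)) := by rw [Finset.mul_sum]
        _ = a * ((v * Real.log v) * (u - 1)) + a * ((u * Real.log u) * (1 - v)) := by
            rw [expand]; field_simp
    -- the first summand is nonpositive
    have hvlog : v * Real.log v ≤ 0 :=
      mul_nonpos_of_nonneg_of_nonpos hv0 (Real.log_nonpos hv0 hv1)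
    have h1st : a * ((v * Real.log v) * (u - 1)) ≤ 0 := by
      have : (v * Real.log v) * (u - 1) ≤ 0 := mul_nonpos_of_nonpos_of_nonneg hvlog (by linarith)
      exact mul_nonpos_of_nonneg_of_nonpos (le_of_lt ha) this
    -- the second via Lstar
    have hls := Lstar hu1 hv0 hv1
    have h2nd : a * ((u * Real.log u) * (1 - v)) ≤ a * (u - v)^2 / Real.exp 1 := by
      calc a * ((u * Real.log u) * (1 - v)) = a * ((1 - v) * (u * Real.log u)) := by ring
        _ ≤ a * ((u - v)^2 / Real.exp 1) :=
            mul_le_mul_of_nonneg_left ((le_div_iff₀' he).mpr hls) ha.le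
        _ = a * (u - v)^2 / Real.exp 1 := by ring
    have hfin : (u - v) * ∑ t ∈ Finset.Icc 1 d, c t * Real.log (d * c t / a)
        ≤ (u - v) * (a * (u - v) / Real.exp 1) := by
      calc (u - v) * ∑ t ∈ Finset.Icc 1 d, c t * Real.log (d * c t / a)
          ≤ a * ((v * Real.log v) * (u - 1)) + a * ((u * Real.log u) * (1 - v)) := key
        _ ≤ a * (u - v)^2 / Real.exp 1 := by linarith
        _ = (u - v) * (a * (u - v) / Real.exp 1) := by ring
    have hS := (mul_le_mul_iff_right₀ huv).mp hfin
    have haux : a * (u - v) = d * (M - μ) := by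
      rw [hu, hv]
      field_simp
    calc ∑ t ∈ Finset.Icc 1 d, c t * Real.log (d * c t / a)
        ≤ a * (u - v) / Real.exp 1 := hS
      _ = d / Real.exp 1 * (M - μ) := by rw [haux]; ring

lemma sum_image_le' {α β : Type*} [DecidableEq α] [DecidableEq β] (T : Finset α) (f : α → β)
    (g : β → ℕ) : ∑ y ∈ T.image f, g y ≤ ∑ x ∈ T, g (f x) := by
  induction T using Finset.induction with
  | empty => simp
  | insert _ _ hx ih =>
    rename_i b T'
    rw [Finset.image_insert, Finset.sum_insert hx]
    by_cases h : f b ∈ T'.image f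
    · rw [Finset.insert_eq_self.2 h]
      exact le_trans ih (Nat.le_add_left _ _)
    · rw [Finset.sum_insert h]
      exact Nat.add_le_add_left ih _

lemma edgeBoundary_eq_sum {G : Type*} [AddCommGroup G] [Fintype G] [DecidableEq G]
    (S A : Finset G) :
    edgeBoundary S A = ∑ s ∈ S, (A.filter fun x => x + s ∉ A).card := by
  unfold edgeBoundary
  rw [Finset.card_filter, Finset.sum_product]
  rw [Finset.sum_comm]
  refine Finset.sum_congr rfl fun s _ => ?_
  rw [Finset.card_filter]

lemma filter_Icc_card {d k : ℕ} (hk : k ≤ d) :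
    ((Finset.Icc 1 d).filter fun t => t ≤ k).card = k := by
  have : ((Finset.Icc 1 d).filter fun t => t ≤ k) = Finset.Icc 1 k := by
    ext t
    simp only [Finset.mem_filter, Finset.mem_Icc]
    omega
  rw [this, Nat.card_Icc]
  omega

lemma filter_Ioc_card {d j k : ℕ} (hk : k ≤ d) :
    ((Finset.Icc 1 d).filter fun t => t ≤ k ∧ ¬ t ≤ j).card = k - j := by
  have : ((Finset.Icc 1 d).filter fun t => t ≤ k ∧ ¬ t ≤ j) = Finset.Ioc j k := by
    ext t
    simp only [Finset.mem_filter, Finset.mem_Icc, Finset.mem_Ioc]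
    omega
  rw [this, Nat.card_Ioc]

lemma fiber_card {G : Type*} [AddCommGroup G] [Fintype G] [DecidableEq G]
    (H : AddSubgroup G) [DecidableEq (G ⧸ H)] (i : G ⧸ H) :
    (Finset.univ.filter fun x => QuotientAddGroup.mk' H x = i).card = Nat.card H := by
  classical
  letI : Fintype H := Fintype.ofFinite H
  obtain ⟨x₀, hx₀⟩ := QuotientAddGroup.mk'_surjective H i
  rw [Nat.card_eq_fintype_card, ← Finset.card_univ]
  refine Finset.card_bij' (fun x _ => (⟨x - x₀, ?_⟩ : H)) (fun h _ => x₀ + (h : G))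
    (fun x hx => Finset.mem_univ _) ?_ ?_ ?_
  · rename_i x hx
    simp only [Finset.mem_filter, Finset.mem_univ, true_and] at hx
    have h2 := hx.trans hx₀.symm
    rw [QuotientAddGroup.mk'_apply, QuotientAddGroup.mk'_apply] at h2
    exact (QuotientAddGroup.eq_iff_sub_mem).mp h2
  · intro h _
    simp only [Finset.mem_filter, Finset.mem_univ, true_and]
    have h2 : ((x₀ + (h:G) : G) : G ⧸ H) = ((x₀ : G) : G ⧸ H) := by
      rw [QuotientAddGroup.eq_iff_sub_mem]
      simpa using h.2
    rw [← hx₀, QuotientAddGroup.mk'_apply, QuotientAddGroup.mk'_apply, h2]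
  · intro x _
    simp
  · intro h _
    simp

open AddSubgroup in
lemma exists_boundary_in_partial_coset {G : Type*} [AddCommGroup G] [Fintype G] [DecidableEq G]
    (s : G) [DecidableEq (G ⧸ zmultiples s)] (A : Finset G) (i : G ⧸ zmultiples s)
    (h1 : 1 ≤ (A.filter fun x => QuotientAddGroup.mk' (zmultiples s) x = i).card)
    (h2 : (A.filter fun x => QuotientAddGroup.mk' (zmultiples s) x = i).card < addOrderOf s) :
    ∃ x, x ∈ A ∧ QuotientAddGroup.mk' (zmultiples s) x = i ∧ x + s ∉ A := by
  classical
  set pr := QuotientAddGroup.mk' (zmultiples s) with hpr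
  by_contra hcon
  push_neg at hcon
  set T := A.filter (fun x => pr x = i) with hT
  have hprs : pr s = 0 := by
    rw [hpr, QuotientAddGroup.mk'_apply, QuotientAddGroup.eq_zero_iff]
    exact mem_zmultiples s
  have hclosed : ∀ x ∈ T, x + s ∈ T := by
    intro x hx
    obtain ⟨hxA, hxi⟩ := Finset.mem_filter.1 hx
    refine Finset.mem_filter.2 ⟨hcon x hxA hxi, ?_⟩
    rw [map_add, hprs, add_zero, hxi]
  have hiter : ∀ (k : ℕ), ∀ x ∈ T, x + k • s ∈ T := by
    intro k
    induction k with
    | zero => intro x hx; simpa using hx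
    | succ k ih =>
      intro x hx
      have := hclosed _ (ih x hx)
      rw [succ_nsmul, ← add_assoc]
      exact this
  obtain ⟨x₀, hx₀⟩ := Finset.card_pos.mp h1
  have hx₀i : pr x₀ = i := (Finset.mem_filter.1 hx₀).2
  have hd : (0:ℤ) < (addOrderOf s : ℤ) := by
    exact_mod_cast addOrderOf_pos s
  have hds : (addOrderOf s : ℤ) • s = 0 := by
    rw [natCast_zsmul]
    exact addOrderOf_nsmul_eq_zero s
  have hsub : Finset.univ.filter (fun x => pr x = i) ⊆ T := by
    intro y hy
    have hyi : pr y = i := (Finset.mem_filter.1 hy).2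
    have h3 := hyi.trans hx₀i.symm
    rw [hpr, QuotientAddGroup.mk'_apply, QuotientAddGroup.mk'_apply,
      QuotientAddGroup.eq_iff_sub_mem] at h3
    obtain ⟨z, hz⟩ := AddSubgroup.mem_zmultiples_iff.mp h3
    have hzz : z • s = ((z % (addOrderOf s : ℤ)).toNat : ℕ) • s := by
      conv_lhs => rw [← Int.emod_add_mul_ediv z (addOrderOf s : ℤ)]
      rw [add_zsmul, mul_comm, mul_zsmul, hds, smul_zero, add_zero]
      conv_rhs => rw [← natCast_zsmul s (z % (addOrderOf s : ℤ)).toNat]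
      rw [Int.toNat_of_nonneg (Int.emod_nonneg z hd.ne')]
    have hy' : y = x₀ + ((z % (addOrderOf s : ℤ)).toNat : ℕ) • s := by
      rw [← hzz, hz]; abel
    rw [hy']
    exact hiter _ x₀ hx₀
  have hTsub : T ⊆ Finset.univ.filter (fun x => pr x = i) :=
    Finset.filter_subset_filter _ (Finset.subset_univ A)
  have hTeq : T = Finset.univ.filter (fun x => pr x = i) := subset_antisymm hTsub hsub
  have hcard := fiber_card (zmultiples s) i
  rw [Nat.card_zmultiples] at hcard
  rw [hTeq, hpr] at h2
  omega

lemma transport {G : Type*} [AddCommGroup G] [Fintype G] [DecidableEq G]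
    (H : AddSubgroup G) [DecidableEq (G ⧸ H)] (A : Finset G) (s' : G) (i : G ⧸ H) :
    (A.filter fun x => QuotientAddGroup.mk' H x = i).card
      ≤ (A.filter fun x => QuotientAddGroup.mk' H x = i + QuotientAddGroup.mk' H s').card
        + (A.filter fun x => QuotientAddGroup.mk' H x = i ∧ x + s' ∉ A).card := by
  classical
  set pr := QuotientAddGroup.mk' H with hpr
  have hsplit : (A.filter fun x => pr x = i ∧ x + s' ∈ A).card
      + (A.filter fun x => pr x = i ∧ x + s' ∉ A).card
      = (A.filter fun x => pr x = i).card := by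
    rw [← Finset.filter_filter, ← Finset.filter_filter]
    exact Finset.card_filter_add_card_filter_not _
  have hinj : (A.filter fun x => pr x = i ∧ x + s' ∈ A).card
      ≤ (A.filter fun x => pr x = i + pr s').card := by
    apply Finset.card_le_card_of_injOn (fun x => x + s')
    · intro x hx
      obtain ⟨hxA, hxi, hxs⟩ := Finset.mem_filter.1 hx
      refine Finset.mem_filter.2 ⟨hxs, ?_⟩
      rw [map_add, hxi]
    · intro x _ y _ hxy
      exact add_right_cancel hxy
  omega

lemma sum_level_exits_le {G : Type*} [AddCommGroup G] [Fintype G] [DecidableEq G]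
    (H : AddSubgroup G) [Fintype (G ⧸ H)] [DecidableEq (G ⧸ H)] (A : Finset G) (s' : G)
    (d : ℕ)
    (hd : ∀ i : G ⧸ H, (A.filter fun x => QuotientAddGroup.mk' H x = i).card ≤ d) :
    ∑ t ∈ Finset.Icc 1 d, (Finset.univ.filter fun i : G ⧸ H =>
        (t ≤ (A.filter fun x => QuotientAddGroup.mk' H x = i).card)
        ∧ ¬ (t ≤ (A.filter fun x => QuotientAddGroup.mk' H x
              = i + QuotientAddGroup.mk' H s').card)).card
      ≤ (A.filter fun x => x + s' ∉ A).card := by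
  classical
  set pr := QuotientAddGroup.mk' H with hpr
  set a : G ⧸ H → ℕ := fun i => (A.filter fun x => pr x = i).card with ha
  -- swap the two sums
  have hswap : ∑ t ∈ Finset.Icc 1 d, (Finset.univ.filter fun i : G ⧸ H =>
        (t ≤ a i) ∧ ¬ (t ≤ a (i + pr s'))).card
      = ∑ i : G ⧸ H, (a i - a (i + pr s')) := by
    have h1 : ∀ t, (Finset.univ.filter fun i : G ⧸ H =>
        (t ≤ a i) ∧ ¬ (t ≤ a (i + pr s'))).card
        = ∑ i : G ⧸ H, if (t ≤ a i) ∧ ¬ (t ≤ a (i + pr s')) then 1 else 0 := by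
      intro t; rw [Finset.card_filter]
    simp_rw [h1]
    rw [Finset.sum_comm]
    refine Finset.sum_congr rfl fun i _ => ?_
    rw [← Finset.card_filter, filter_Ioc_card (hd i)]
  rw [hswap]
  -- fiberwise count of the boundary set
  have hfib : (A.filter fun x => x + s' ∉ A).card
      = ∑ i : G ⧸ H, (A.filter fun x => pr x = i ∧ x + s' ∉ A).card := by
    rw [Finset.card_eq_sum_card_fiberwise (f := pr) (t := Finset.univ)
      (fun x _ => Finset.mem_univ _)]
    refine Finset.sum_congr rfl fun i _ => ?_
    congr 1
    rw [Finset.filter_filter]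
    apply Finset.filter_congr
    intro x _
    simp only [and_comm]
  rw [hfib]
  apply Finset.sum_le_sum
  intro i _
  have := transport H A s' i
  rw [← hpr] at this
  have e1 : (A.filter fun x => pr x = i).card = a i := rfl
  have e2 : (A.filter fun x => pr x = i + pr s').card = a (i + pr s') := rfl
  omega
set_option maxHeartbeats 1000000 in
theorem main_aux {G : Type u} [AddCommGroup G] [Fintype G] [DecidableEq G]
    {m : ℕ} (hm : 2 ≤ m) (hexp : AddMonoid.exponent G ∣ m)
    (A S : Finset G) (hA : A.Nonempty) (hS : AddSubgroup.closure (S : Set G) = ⊤) :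
    Real.exp 1 / m * A.card * Real.log ((Fintype.card G : ℝ) / A.card)
      ≤ (edgeBoundary S A : ℝ) := by
  classical
  by_cases hAu : A = Finset.univ
  · have hcard : (A.card : ℝ) = (Fintype.card G : ℝ) := by
      rw [hAu, Finset.card_univ]
    rw [hcard, div_self, Real.log_one, mul_zero]
    · positivity
    · have : Nonempty G := ⟨0⟩
      exact_mod_cast Fintype.card_ne_zero
  · -- A is a proper nonempty subset
    have hApos : 0 < A.card := hA.card_pos
    have hAlt : A.card < Fintype.card G := by
      rw [← Finset.card_univ]
      exact Finset.card_lt_card (Finset.ssubset_univ_iff.mpr hAu)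
    -- find a nonzero generator
    have hs_ex : ∃ s ∈ S, s ≠ 0 := by
      by_contra h
      push_neg at h
      have hsub : (S : Set G) ⊆ {0} := fun x hx => h x (by exact_mod_cast hx)
      have hle : (⊤ : AddSubgroup G) ≤ AddSubgroup.closure {0} := by
        rw [← hS]; exact AddSubgroup.closure_mono hsub
      rw [AddSubgroup.closure_singleton_zero] at hle
      have hz : ∀ x : G, x = 0 := fun x => by
        simpa [AddSubgroup.mem_bot] using hle (AddSubgroup.mem_top x)
      have : Fintype.card G ≤ 1 := Fintype.card_le_one_iff.2 fun a b => by rw [hz a, hz b]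
      omega
    obtain ⟨s, hsS, hs0⟩ := hs_ex
    set d := addOrderOf s with hd
    have hdH : Nat.card (AddSubgroup.zmultiples s) = d := Nat.card_zmultiples s
    have hd1 : 0 < d := addOrderOf_pos s
    have hd2 : 2 ≤ d := by
      have : d ≠ 1 := fun h1 => hs0 (AddMonoid.addOrderOf_eq_one_iff.mp h1)
      omega
    have hdm : d ∣ m := dvd_trans (AddMonoid.addOrder_dvd_exponent s) hexp
    have hdm' : d ≤ m := Nat.le_of_dvd (by omega) hdm
    letI : Fintype (G ⧸ AddSubgroup.zmultiples s) := Fintype.ofFinite _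
    letI : DecidableEq (G ⧸ AddSubgroup.zmultiples s) := Classical.decEq _
    set pr := QuotientAddGroup.mk' (AddSubgroup.zmultiples s) with hpr
    set nQ := Fintype.card (G ⧸ AddSubgroup.zmultiples s) with hnQ
    have hcards : Fintype.card G = nQ * d := by
      have h := AddSubgroup.card_eq_card_quotient_mul_card_addSubgroup
        (AddSubgroup.zmultiples s)
      rw [hdH] at h
      rw [Nat.card_eq_fintype_card, Nat.card_eq_fintype_card] at h
      exact h
    have hnQ1 : 0 < nQ := by
      have : Nonempty (G ⧸ AddSubgroup.zmultiples s) := ⟨0⟩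
      exact Fintype.card_pos
    have hnQlt : nQ < Fintype.card G := by
      rw [hcards]
      have h2 : nQ * 2 ≤ nQ * d := Nat.mul_le_mul_left nQ (by omega)
      omega
    have hexpQ : AddMonoid.exponent (G ⧸ AddSubgroup.zmultiples s) ∣ m := by
      apply AddMonoid.exponent_dvd_of_forall_nsmul_eq_zero
      intro g
      obtain ⟨x, rfl⟩ := QuotientAddGroup.mk'_surjective (AddSubgroup.zmultiples s) g
      rw [← map_nsmul]
      have hmx : m • x = 0 := by
        obtain ⟨k, hk⟩ := hexp
        have h0 : AddMonoid.exponent G • x = 0 := AddMonoid.exponent_nsmul_eq_zero x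
        rw [hk]
        first
        | rw [mul_nsmul, h0, smul_zero]
        | rw [mul_nsmul', h0, smul_zero]
      rw [hmx, map_zero]
    set SQ := (S.erase s).image pr with hSQ
    have hSQgen : AddSubgroup.closure (SQ : Set (G ⧸ AddSubgroup.zmultiples s)) = ⊤ := by
      rw [hSQ, Finset.coe_image]
      have hsurj : Function.Surjective pr := QuotientAddGroup.mk'_surjective _
      have h1 : AddSubgroup.closure (pr '' (S : Set G)) = ⊤ := by
        rw [← AddMonoidHom.map_closure, hS, AddSubgroup.map_top_of_surjective _ hsurj]
      apply top_unique
      rw [← h1]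
      apply (AddSubgroup.closure_le _).2
      intro y hy
      obtain ⟨x, hxS, rfl⟩ := hy
      by_cases hxs : x = s
      · have hzero : pr x = 0 := by
          rw [hxs, hpr, QuotientAddGroup.mk'_apply, QuotientAddGroup.eq_zero_iff]
          exact AddSubgroup.mem_zmultiples s
        rw [hzero]
        exact AddSubgroup.zero_mem _
      · apply AddSubgroup.subset_closure
        exact Set.mem_image_of_mem pr (by
          rw [Finset.coe_erase]
          exact Set.mem_diff_singleton.mpr ⟨hxS, hxs⟩)
    set ai : G ⧸ AddSubgroup.zmultiples s → ℕ :=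
      fun i => (A.filter fun x => pr x = i).card with hai
    have hfibd : ∀ i, (Finset.univ.filter fun x => pr x = i).card = d := by
      intro i
      rw [hpr, fiber_card (AddSubgroup.zmultiples s) i, hdH]
    have hai_le : ∀ i, ai i ≤ d := by
      intro i
      rw [hai, ← hfibd i]
      exact Finset.card_le_card (Finset.filter_subset_filter _ (Finset.subset_univ A))
    have hai_sum : ∑ i, ai i = A.card :=
      (Finset.card_eq_sum_card_fiberwise (f := pr) (t := Finset.univ)
        (fun x _ => Finset.mem_univ _)).symm
    set B : ℕ → Finset (G ⧸ AddSubgroup.zmultiples s) :=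
      fun t => Finset.univ.filter fun i => t ≤ ai i with hB
    set c : ℕ → ℕ := fun t => (B t).card with hc
    have hBmono : ∀ {t t'}, t ≤ t' → B t' ⊆ B t := by
      intro t t' h i hi
      simp only [hB, Finset.mem_filter] at hi ⊢
      exact ⟨hi.1, le_trans h hi.2⟩
    have hcsum : ∑ t ∈ Finset.Icc 1 d, c t = A.card := by
      have h1 : ∀ t, c t = ∑ i, if t ≤ ai i then 1 else 0 := fun t => by
        simp only [hc, hB]
        rw [Finset.card_filter]
      calc ∑ t ∈ Finset.Icc 1 d, c t
          = ∑ t ∈ Finset.Icc 1 d, ∑ i, if t ≤ ai i then 1 else 0 :=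
            Finset.sum_congr rfl fun t _ => h1 t
        _ = ∑ i, ∑ t ∈ Finset.Icc 1 d, if t ≤ ai i then 1 else 0 := Finset.sum_comm
        _ = ∑ i, ai i := Finset.sum_congr rfl fun i _ => by
            rw [← Finset.card_filter, filter_Icc_card (hai_le i)]
        _ = A.card := hai_sum
    -- runs bound
    have hruns : (B 1 \ B d).card ≤ (A.filter fun x => x + s ∉ A).card := by
      set f : (G ⧸ AddSubgroup.zmultiples s) → G := fun i =>
        if h : ∃ x, x ∈ A ∧ pr x = i ∧ x + s ∉ A then h.choose else 0 with hf
      have hwit : ∀ i ∈ B 1 \ B d, f i ∈ A ∧ pr (f i) = i ∧ f i + s ∉ A := by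
        intro i hi
        rw [Finset.mem_sdiff] at hi
        obtain ⟨hi1, hid⟩ := hi
        simp only [hB, Finset.mem_filter, Finset.mem_univ, true_and] at hi1 hid
        have h2' : ai i < d := by omega
        have hex : ∃ x, x ∈ A ∧ pr x = i ∧ x + s ∉ A :=
          exists_boundary_in_partial_coset s A i hi1 h2'
        rw [hf]
        simp only [dif_pos hex]
        exact hex.choose_spec
      apply Finset.card_le_card_of_injOn f
      · intro i hi
        obtain ⟨h1, _, h3⟩ := hwit i hi
        exact Finset.mem_filter.2 ⟨h1, h3⟩
      · intro i hi j hj hij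
        have e1 := (hwit i hi).2.1
        have e2 := (hwit j hj).2.1
        rw [← e1, ← e2, hij]
    -- transported boundary bound
    have htrans : ∑ t ∈ Finset.Icc 1 d, edgeBoundary SQ (B t)
        ≤ ∑ s' ∈ S.erase s, (A.filter fun x => x + s' ∉ A).card := by
      have step1 : ∑ t ∈ Finset.Icc 1 d, edgeBoundary SQ (B t)
          = ∑ σ ∈ SQ, ∑ t ∈ Finset.Icc 1 d, ((B t).filter fun i => i + σ ∉ B t).card := by
        rw [← Finset.sum_comm]
        exact Finset.sum_congr rfl fun t _ => edgeBoundary_eq_sum _ _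
      rw [step1, hSQ]
      calc ∑ σ ∈ (S.erase s).image pr, ∑ t ∈ Finset.Icc 1 d,
              ((B t).filter fun i => i + σ ∉ B t).card
          ≤ ∑ s' ∈ S.erase s, ∑ t ∈ Finset.Icc 1 d,
              ((B t).filter fun i => i + pr s' ∉ B t).card := sum_image_le' _ _ _
        _ ≤ ∑ s' ∈ S.erase s, (A.filter fun x => x + s' ∉ A).card := by
            apply Finset.sum_le_sum
            intro s' _
            have hmatch : ∀ t, ((B t).filter fun i => i + pr s' ∉ B t)
                = Finset.univ.filter
                    (fun i => (t ≤ ai i) ∧ ¬ (t ≤ ai (i + pr s'))) := by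
              intro t
              simp only [hB]
              rw [Finset.filter_filter]
              apply Finset.filter_congr
              intro i _
              simp [Finset.mem_filter]
            have hkey := sum_level_exits_le (AddSubgroup.zmultiples s) A s' d hai_le
            calc ∑ t ∈ Finset.Icc 1 d, ((B t).filter fun i => i + pr s' ∉ B t).card
                = ∑ t ∈ Finset.Icc 1 d, (Finset.univ.filter
                    (fun i => (t ≤ ai i) ∧ ¬ (t ≤ ai (i + pr s')))).card :=
                  Finset.sum_congr rfl fun t _ => by rw [hmatch t]
              _ ≤ _ := hkey
    -- combined counting bound
    have hmain_nat : (B 1 \ B d).card + ∑ t ∈ Finset.Icc 1 d, edgeBoundary SQ (B t)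
        ≤ edgeBoundary S A := by
      rw [edgeBoundary_eq_sum, ← Finset.add_sum_erase S _ hsS]
      exact Nat.add_le_add hruns htrans
    -- induction hypothesis per level
    have hIH : ∀ t ∈ Finset.Icc 1 d,
        Real.exp 1 / m * (c t : ℝ) * Real.log ((nQ : ℝ) / (c t : ℝ))
          ≤ (edgeBoundary SQ (B t) : ℝ) := by
      intro t ht
      rcases Nat.eq_zero_or_pos (c t) with h0 | hpos
      · rw [h0]
        simp
      · have hne : (B t).Nonempty := Finset.card_pos.mp hpos
        have := main_aux hm hexpQ (B t) SQ hne hSQgen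
        rw [← hnQ] at this
        exact this
    -- real-number glue
    have hmR : (0:ℝ) < m := by exact_mod_cast (by omega : 0 < m)
    have haR0 : (0:ℝ) < (A.card : ℝ) := by exact_mod_cast hApos
    have hnQR0 : (0:ℝ) < (nQ : ℝ) := by exact_mod_cast hnQ1
    have hdR0 : (0:ℝ) < (d : ℝ) := by exact_mod_cast hd1
    have heR : (0:ℝ) < Real.exp 1 := Real.exp_pos 1
    have hcbounds : ∀ t ∈ Finset.Icc 1 d, ((c d : ℕ) : ℝ) ≤ (c t : ℝ) ∧ (c t : ℝ) ≤ (c 1 : ℝ) := by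
      intro t ht
      rw [Finset.mem_Icc] at ht
      constructor
      · exact_mod_cast Finset.card_le_card (hBmono ht.2)
      · exact_mod_cast Finset.card_le_card (hBmono ht.1)
    have hcsumR : ∑ t ∈ Finset.Icc 1 d, ((c t : ℕ) : ℝ) = (A.card : ℝ) := by
      rw [← hcsum]
      exact (Nat.cast_sum _ _).symm
    have hMAL := MAL hd1 (fun t => ((c t : ℕ) : ℝ)) (A.card : ℝ) ((c 1 : ℕ) : ℝ)
      ((c d : ℕ) : ℝ) hcbounds (by positivity) hcsumR haR0
    have hsplit : ∀ t ∈ Finset.Icc 1 d,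
        (c t : ℝ) * Real.log ((Fintype.card G : ℝ) / (A.card : ℝ))
        = (c t : ℝ) * Real.log ((nQ : ℝ) / (c t : ℝ))
          + (c t : ℝ) * Real.log ((d : ℝ) * (c t : ℝ) / (A.card : ℝ)) := by
      intro t _
      rcases Nat.eq_zero_or_pos (c t) with h0 | hpos
      · rw [h0]
        simp only [Nat.cast_zero, zero_mul, add_zero]
      · have hct : (0:ℝ) < (c t : ℝ) := by exact_mod_cast hpos
        have hprod : (Fintype.card G : ℝ) / (A.card : ℝ)
            = ((nQ : ℝ) / (c t : ℝ)) * ((d : ℝ) * (c t : ℝ) / (A.card : ℝ)) := by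
          rw [hcards]
          push_cast
          field_simp
        rw [hprod, Real.log_mul (by positivity) (by positivity)]
        ring
    -- second sum is at most c 1 - c d
    have hsecond : Real.exp 1 / m * (∑ t ∈ Finset.Icc 1 d,
          (c t : ℝ) * Real.log ((d : ℝ) * (c t : ℝ) / (A.card : ℝ)))
        ≤ ((c 1 : ℕ) : ℝ) - ((c d : ℕ) : ℝ) := by
      have hcd1 : ((c d : ℕ) : ℝ) ≤ ((c 1 : ℕ) : ℝ) := by
        exact_mod_cast Finset.card_le_card (hBmono (by omega))
      calc Real.exp 1 / m * (∑ t ∈ Finset.Icc 1 d,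
            (c t : ℝ) * Real.log ((d : ℝ) * (c t : ℝ) / (A.card : ℝ)))
          ≤ Real.exp 1 / m * ((d : ℝ) / Real.exp 1 * (((c 1 : ℕ) : ℝ) - ((c d : ℕ) : ℝ))) := by
            apply mul_le_mul_of_nonneg_left hMAL (by positivity)
        _ = (d : ℝ) / m * (((c 1 : ℕ) : ℝ) - ((c d : ℕ) : ℝ)) := by
            field_simp
        _ ≤ 1 * (((c 1 : ℕ) : ℝ) - ((c d : ℕ) : ℝ)) := by
            apply mul_le_mul_of_nonneg_right
            · rw [div_le_one hmR]
              exact_mod_cast hdm'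
            · linarith
        _ = ((c 1 : ℕ) : ℝ) - ((c d : ℕ) : ℝ) := one_mul _
    -- first sum is at most the sum of quotient edge boundaries
    have hfirst : (∑ t ∈ Finset.Icc 1 d, Real.exp 1 / m
          * ((c t : ℝ) * Real.log ((nQ : ℝ) / (c t : ℝ))))
        ≤ ∑ t ∈ Finset.Icc 1 d, (edgeBoundary SQ (B t) : ℝ) := by
      apply Finset.sum_le_sum
      intro t ht
      have := hIH t ht
      calc Real.exp 1 / m * ((c t : ℝ) * Real.log ((nQ : ℝ) / (c t : ℝ)))
          = Real.exp 1 / m * (c t : ℝ) * Real.log ((nQ : ℝ) / (c t : ℝ)) := by ring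
        _ ≤ (edgeBoundary SQ (B t) : ℝ) := this
    -- conclude
    have hsd : (((B 1 \ B d).card : ℕ) : ℝ) = ((c 1 : ℕ) : ℝ) - ((c d : ℕ) : ℝ) := by
      rw [Finset.card_sdiff_of_subset (hBmono (by omega))]
      have hle : c d ≤ c 1 := Finset.card_le_card (hBmono (by omega))
      push_cast [Nat.cast_sub hle]
      exact Nat.cast_sub hle
    have hcast : (((B 1 \ B d).card + ∑ t ∈ Finset.Icc 1 d, edgeBoundary SQ (B t) : ℕ) : ℝ)
        ≤ (edgeBoundary S A : ℝ) := by exact_mod_cast hmain_nat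
    calc Real.exp 1 / m * (A.card : ℝ)
            * Real.log ((Fintype.card G : ℝ) / (A.card : ℝ))
        = Real.exp 1 / m * (∑ t ∈ Finset.Icc 1 d, ((c t : ℕ) : ℝ))
            * Real.log ((Fintype.card G : ℝ) / (A.card : ℝ)) := by rw [hcsumR]
      _ = ∑ t ∈ Finset.Icc 1 d, Real.exp 1 / m
            * ((c t : ℝ) * Real.log ((Fintype.card G : ℝ) / (A.card : ℝ))) := by
          rw [mul_assoc, Finset.sum_mul, Finset.mul_sum]
      _ = ∑ t ∈ Finset.Icc 1 d, (Real.exp 1 / m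
            * ((c t : ℝ) * Real.log ((nQ : ℝ) / (c t : ℝ)))
          + Real.exp 1 / m
            * ((c t : ℝ) * Real.log ((d : ℝ) * (c t : ℝ) / (A.card : ℝ)))) := by
          refine Finset.sum_congr rfl fun t ht => ?_
          rw [← mul_add, ← hsplit t ht]
      _ = (∑ t ∈ Finset.Icc 1 d, Real.exp 1 / m
            * ((c t : ℝ) * Real.log ((nQ : ℝ) / (c t : ℝ))))
          + Real.exp 1 / m * (∑ t ∈ Finset.Icc 1 d,
            (c t : ℝ) * Real.log ((d : ℝ) * (c t : ℝ) / (A.card : ℝ))) := by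
          rw [Finset.sum_add_distrib, Finset.mul_sum]
      _ ≤ (∑ t ∈ Finset.Icc 1 d, (edgeBoundary SQ (B t) : ℝ))
          + (((c 1 : ℕ) : ℝ) - ((c d : ℕ) : ℝ)) := add_le_add hfirst hsecond
      _ = (((B 1 \ B d).card + ∑ t ∈ Finset.Icc 1 d, edgeBoundary SQ (B t) : ℕ) : ℝ) := by
          push_cast
          rw [hsd]
          push_cast
          ring
      _ ≤ (edgeBoundary S A : ℝ) := hcast
termination_by Fintype.card G
decreasing_by exact hnQlt

theorem stmt0 {G : Type*} [AddCommGroup G] [Fintype G] [DecidableEq G]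
    {m : ℕ} (hm : 2 ≤ m) (hexp : AddMonoid.exponent G ∣ m)
    {A S : Finset G} (hA : A.Nonempty)
    (hS : AddSubgroup.closure (S : Set G) = ⊤) :
    Real.exp 1 / m * A.card * Real.log ((Fintype.card G : ℝ) / A.card)
      ≤ (edgeBoundary S A : ℝ) := by
  exact main_aux hm hexp A S hA hS
end

section
/- For every real number x, ω_4(x) = (1/2)·ω_2(x); that is, the 4-adic generalized Takagi function is half the classical Takagi function. -/
lemma nid_nonneg (x : ℝ) : 0 ≤ nearestIntDist x := abs_nonneg _

lemma nid_le_half (x : ℝ) : nearestIntDist x ≤ 1 / 2 := by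
  have := abs_sub_round x
  simpa [nearestIntDist] using this

lemma nid_int_add (x : ℝ) (n : ℤ) : nearestIntDist (x + n) = nearestIntDist x := by
  simp [nearestIntDist, round_add_intCast, add_sub_add_right_eq_sub]

lemma nid_of_mem (r : ℝ) (h1 : -(1/2) ≤ r) (h2 : r < 1/2) : nearestIntDist r = |r| := by
  have : round r = 0 := by
    rw [round_eq, Int.floor_eq_zero_iff]
    constructor <;> simp <;> linarith
  simp [nearestIntDist, this]

lemma key (y : ℝ) :
    nearestIntDist y + (1/2) * nearestIntDist (2 * y) = 2 * min (nearestIntDist y) (1/4) := by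
  set n : ℤ := round y with hn
  set r : ℝ := y - n with hr
  have hy : y = r + n := by ring
  have hrlb : -(1/2) ≤ r := by
    have := round_le_add_half y
    rw [hr, hn]; linarith
  have hrub : r < 1/2 := by
    have := sub_half_lt_round y
    rw [hr, hn]; linarith
  have h1 : nearestIntDist y = |r| := by
    rw [hy, nid_int_add, nid_of_mem r hrlb hrub]
  have h2 : nearestIntDist (2 * y) = nearestIntDist (2 * r) := by
    have : 2 * y = 2 * r + ((2 * n : ℤ) : ℝ) := by push_cast; ring
    rw [this, nid_int_add]
  rw [h1, h2]
  rcases lt_or_ge r (-(1/4)) with hc | hc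
  · -- r ∈ [-1/2, -1/4): round (2r) = -1
    have hround : round (2 * r) = -1 := by
      rw [round_eq]
      have : (-1 : ℤ) ≤ 2 * r + 1/2 ∧ 2 * r + 1/2 < -1 + 1 := by
        constructor <;> push_cast <;> linarith
      exact Int.floor_eq_iff.mpr (by push_cast; constructor <;> [linarith; linarith])
    have habs : |r| = -r := abs_of_neg (by linarith)
    have h3 : nearestIntDist (2 * r) = 2 * r + 1 := by
      rw [nearestIntDist, hround]
      push_cast
      rw [abs_of_nonneg (by linarith)]
      ring
    rw [habs, h3, min_eq_right (by linarith)]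
    ring
  rcases lt_or_ge r (1/4) with hc2 | hc2
  · -- r ∈ [-1/4, 1/4): round(2r) = 0
    have h3 : nearestIntDist (2 * r) = 2 * |r| := by
      rw [nid_of_mem (2 * r) (by linarith) (by linarith), abs_mul]
      simp
    rw [h3, min_eq_left (by rcases abs_cases r with ⟨h, _⟩ | ⟨h, _⟩ <;> linarith)]
    ring
  · -- r ∈ [1/4, 1/2): round(2r) = 1
    have hround : round (2 * r) = 1 := by
      rw [round_eq]
      exact Int.floor_eq_iff.mpr (by push_cast; constructor <;> linarith)
    have habs : |r| = r := abs_of_nonneg (by linarith)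
    have h3 : nearestIntDist (2 * r) = 1 - 2 * r := by
      rw [nearestIntDist, hround]
      push_cast
      rw [abs_of_nonpos (by linarith)]
      ring
    rw [habs, h3, min_eq_right (by linarith)]
    ring

lemma summable_aux (x : ℝ) : Summable fun k : ℕ => ((2:ℝ) ^ k)⁻¹ * nearestIntDist (2 ^ k * x) := by
  apply Summable.of_nonneg_of_le
    (fun k => mul_nonneg (by positivity) (nid_nonneg _))
    (fun k => ?_) summable_geometric_two
  calc ((2:ℝ) ^ k)⁻¹ * nearestIntDist (2 ^ k * x)
      ≤ ((2:ℝ) ^ k)⁻¹ * 1 := by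
        apply mul_le_mul_of_nonneg_left _ (by positivity)
        linarith [nid_le_half (2 ^ k * x)]
    _ = (1/2) ^ k := by rw [mul_one, one_div, inv_pow]

set_option maxHeartbeats 1000000 in
theorem stmt2 (x : ℝ) : omegaT 4 x = (1 / 2) * omegaT 2 x := by
  have hmin : ∀ y : ℝ, min (nearestIntDist y) (1/2) = nearestIntDist y :=
    fun y => min_eq_left (nid_le_half y)
  have hS := summable_aux x
  have h2 : omegaT 2 x = ∑' k : ℕ, ((2:ℝ) ^ k)⁻¹ * nearestIntDist (2 ^ k * x) := by
    unfold omegaT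
    push_cast
    simp only [hmin]
  have he : Summable fun k : ℕ => ((2:ℝ) ^ (2*k))⁻¹ * nearestIntDist (2 ^ (2*k) * x) := by
    have := hS.comp_injective (i := fun k : ℕ => 2 * k) (fun a b h => by dsimp only at h; omega)
    simpa [Function.comp_def] using this
  have ho : Summable fun k : ℕ => ((2:ℝ) ^ (2*k+1))⁻¹ * nearestIntDist (2 ^ (2*k+1) * x) := by
    have := hS.comp_injective (i := fun k : ℕ => 2 * k + 1) (fun a b h => by dsimp only at h; omega)
    simpa [Function.comp_def] using this
  have hsplit := tsum_even_add_odd (f := fun k : ℕ => ((2:ℝ) ^ k)⁻¹ * nearestIntDist (2 ^ k * x)) he ho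
  have h4 : omegaT 4 x = ∑' k : ℕ, ((4:ℝ) ^ k)⁻¹ * min (nearestIntDist (4 ^ k * x)) (1/4) := by
    unfold omegaT; norm_num
  rw [h4, h2, ← hsplit, mul_add]
  rw [← tsum_mul_left, ← tsum_mul_left, ← Summable.tsum_add (he.mul_left _) (ho.mul_left _)]
  apply tsum_congr
  intro k
  have e1 : (2:ℝ) ^ (2*k) = 4 ^ k := by rw [pow_mul]; norm_num
  have e2 : (2:ℝ) ^ (2*k+1) = 2 * 4 ^ k := by rw [pow_succ, e1]; ring
  have hkey := key ((4:ℝ) ^ k * x)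
  have h2y : (2:ℝ) * (4 ^ k * x) = 2 * 4 ^ k * x := by ring
  rw [e1, e2, mul_inv, ← h2y]
  linear_combination (-(1/2) * ((4:ℝ) ^ k)⁻¹) * hkey
end

section
/- (Boros–Páles inequality) For all real numbers x_1 and x_2, ω_2((x_1 + x_2)/2) ≤ (ω_2(x_1) + ω_2(x_2))/2 + (1/2)·|x_1 − x_2|. -/
namespace BorosPales

local notation "f" => nearestIntDist

lemma f_nonneg (x : ℝ) : 0 ≤ f x := abs_nonneg _

lemma f_le_half (x : ℝ) : f x ≤ 1 / 2 := abs_sub_round x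

/-- If `m` is an integer within `1/2` of `x`, then `f x = |x - m|`. -/
lemma f_eq_abs (x : ℝ) (m : ℤ) (hm : |x - (m : ℝ)| ≤ 1 / 2) : f x = |x - (m : ℝ)| := by
  have h1 : |x - (round x : ℝ)| ≤ 1 / 2 := abs_sub_round x
  have h1' := abs_le.mp h1
  have hm' := abs_le.mp hm
  have hk1 : (-1 : ℤ) ≤ round x - m := by
    have : (-1 : ℝ) ≤ (round x : ℝ) - m := by push_cast; linarith
    exact_mod_cast this
  have hk2 : round x - m ≤ 1 := by
    have : ((round x : ℝ)) - m ≤ 1 := by push_cast; linarith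
    exact_mod_cast this
  interval_cases h : (round x - m)
  · -- round x = m - 1
    have hr : (round x : ℝ) = (m : ℝ) - 1 := by
      have : ((round x - m : ℤ) : ℝ) = -1 := by rw [h]; norm_num
      push_cast at this; linarith
    have hx : x - (m : ℝ) = -(1 / 2) := by
      rw [hr] at h1'
      linarith [h1'.1, h1'.2, hm'.1, hm'.2]
    unfold nearestIntDist
    rw [hr, hx]
    rw [show x - ((m:ℝ) - 1) = x - (m:ℝ) + 1 by ring, hx]
    norm_num
  · -- round x = m
    have hr : (round x : ℝ) = (m : ℝ) := by
      have : ((round x - m : ℤ) : ℝ) = 0 := by rw [h]; norm_num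
      push_cast at this; linarith
    unfold nearestIntDist; rw [hr]
  · -- round x = m + 1
    have hr : (round x : ℝ) = (m : ℝ) + 1 := by
      have : ((round x - m : ℤ) : ℝ) = 1 := by rw [h]; norm_num
      push_cast at this; linarith
    have hx : x - (m : ℝ) = 1 / 2 := by
      rw [hr] at h1'
      linarith [h1'.1, h1'.2, hm'.1, hm'.2]
    unfold nearestIntDist
    rw [hr, show x - ((m:ℝ) + 1) = x - (m:ℝ) - 1 by ring, hx]
    norm_num

lemma f_int_add (x : ℝ) (n : ℤ) : f (x + (n : ℝ)) = f x := by
  unfold nearestIntDist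
  rw [round_add_intCast]
  push_cast
  ring_nf

lemma f_half (x : ℝ) : f (x + 1 / 2) = 1 / 2 - f x := by
  set r : ℝ := x - (round x : ℝ) with hr
  have hb := abs_le.mp (abs_sub_round x)
  have hfx : f x = |r| := rfl
  rcases le_total r 0 with hs | hs
  · have e : f (x + 1 / 2) = |x + 1 / 2 - ((round x : ℤ) : ℝ)| := by
      apply f_eq_abs
      rw [abs_le]; push_cast; constructor <;> [linarith [hb.1]; linarith [hb.2]]
    rw [e, hfx]
    push_cast
    rw [show x + 1 / 2 - (round x : ℝ) = r + 1 / 2 by rw [hr]; ring]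
    rw [abs_of_nonneg (by linarith [hb.1]), abs_of_nonpos hs]
    ring
  · have e : f (x + 1 / 2) = |x + 1 / 2 - ((round x + 1 : ℤ) : ℝ)| := by
      apply f_eq_abs
      rw [abs_le]; push_cast; constructor <;> [linarith [hb.1]; linarith [hb.2]]
    rw [e, hfx]
    push_cast
    rw [show x + 1 / 2 - ((round x : ℝ) + 1) = r - 1 / 2 by rw [hr]; ring]
    rw [abs_of_nonpos (by linarith [hb.2]), abs_of_nonneg hs]
    ring

lemma f_double_le (u : ℝ) (hu : f u ≤ 1 / 4) : f (2 * u) = 2 * f u := by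
  set r : ℝ := u - (round u : ℝ) with hr
  have hfu : f u = |r| := rfl
  rw [hfu] at hu
  have e : f (2 * u) = |2 * u - ((2 * round u : ℤ) : ℝ)| := by
    apply f_eq_abs
    push_cast
    rw [show 2 * u - 2 * (round u : ℝ) = 2 * r by rw [hr]; ring, abs_mul]
    rw [abs_of_nonneg (by norm_num : (0:ℝ) ≤ 2)]
    linarith
  rw [e, hfu]
  push_cast
  rw [show 2 * u - 2 * (round u : ℝ) = 2 * r by rw [hr]; ring, abs_mul,
    abs_of_nonneg (by norm_num : (0:ℝ) ≤ 2)]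

lemma f_double_ge (u : ℝ) (hu : 1 / 4 ≤ f u) : f (2 * u) = 1 - 2 * f u := by
  set r : ℝ := u - (round u : ℝ) with hr
  have hb := abs_le.mp (abs_sub_round u)
  have hfu : f u = |r| := rfl
  rw [hfu] at hu
  rcases le_total 0 r with hs | hs
  · have hru : |r| = r := abs_of_nonneg hs
    rw [hru] at hu
    have e : f (2 * u) = |2 * u - ((2 * round u + 1 : ℤ) : ℝ)| := by
      apply f_eq_abs
      push_cast
      rw [show 2 * u - (2 * (round u : ℝ) + 1) = 2 * r - 1 by rw [hr]; ring]
      rw [abs_le]; constructor <;> [linarith; linarith [hb.2]]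
    rw [e, hfu, hru]
    push_cast
    rw [show 2 * u - (2 * (round u : ℝ) + 1) = 2 * r - 1 by rw [hr]; ring]
    rw [abs_of_nonpos (by linarith [hb.2])]
    ring
  · have hru : |r| = -r := abs_of_nonpos hs
    rw [hru] at hu
    have e : f (2 * u) = |2 * u - ((2 * round u - 1 : ℤ) : ℝ)| := by
      apply f_eq_abs
      push_cast
      rw [show 2 * u - (2 * (round u : ℝ) - 1) = 2 * r + 1 by rw [hr]; ring]
      rw [abs_le]; constructor <;> [linarith [hb.1]; linarith]
    rw [e, hfu, hru]
    push_cast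
    rw [show 2 * u - (2 * (round u : ℝ) - 1) = 2 * r + 1 by rw [hr]; ring]
    rw [abs_of_nonneg (by linarith [hb.1])]
    ring

/-- If `f v ≤ h ≤ 1/4` then `f (v+h) + f (v-h) = 2h`. -/
lemma sum_near (v h : ℝ) (h0 : 0 ≤ h) (h4 : h ≤ 1 / 4) (hv : f v ≤ h) :
    f (v + h) + f (v - h) = 2 * h := by
  set r : ℝ := v - (round v : ℝ) with hr
  have hfv : f v = |r| := rfl
  rw [hfv] at hv
  have hb := abs_le.mp hv
  have e1 : f (v + h) = |v + h - ((round v : ℤ) : ℝ)| := by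
    apply f_eq_abs
    rw [show v + h - ((round v : ℤ) : ℝ) = r + h by rw [hr]; push_cast; ring]
    rw [abs_le]; constructor <;> [linarith [hb.1]; linarith [hb.2]]
  have e2 : f (v - h) = |v - h - ((round v : ℤ) : ℝ)| := by
    apply f_eq_abs
    rw [show v - h - ((round v : ℤ) : ℝ) = r - h by rw [hr]; push_cast; ring]
    rw [abs_le]; constructor <;> [linarith [hb.1]; linarith [hb.2]]
  rw [e1, e2]
  rw [show v + h - ((round v : ℤ) : ℝ) = r + h by rw [hr]; push_cast; ring]
  rw [show v - h - ((round v : ℤ) : ℝ) = r - h by rw [hr]; push_cast; ring]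
  rw [abs_of_nonneg (by linarith [hb.1]), abs_of_nonpos (by linarith [hb.2])]
  ring

/-- If `h ≤ f u ≤ 1/2 - h` then `f (u+h) + f (u-h) = 2 f u`. -/
lemma sum_mid (u h : ℝ) (h0 : 0 ≤ h) (hl : h ≤ f u) (hrr : f u ≤ 1 / 2 - h) :
    f (u + h) + f (u - h) = 2 * f u := by
  set r : ℝ := u - (round u : ℝ) with hr
  have hfu : f u = |r| := rfl
  rw [hfu] at hl hrr
  rcases le_total 0 r with hs | hs
  · have hru : |r| = r := abs_of_nonneg hs
    rw [hru] at hl hrr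
    have e1 : f (u + h) = |u + h - ((round u : ℤ) : ℝ)| := by
      apply f_eq_abs
      rw [show u + h - ((round u : ℤ) : ℝ) = r + h by rw [hr]; push_cast; ring]
      rw [abs_le]; constructor <;> linarith
    have e2 : f (u - h) = |u - h - ((round u : ℤ) : ℝ)| := by
      apply f_eq_abs
      rw [show u - h - ((round u : ℤ) : ℝ) = r - h by rw [hr]; push_cast; ring]
      rw [abs_le]; constructor <;> linarith
    rw [e1, e2, hfu, hru]
    rw [show u + h - ((round u : ℤ) : ℝ) = r + h by rw [hr]; push_cast; ring]
    rw [show u - h - ((round u : ℤ) : ℝ) = r - h by rw [hr]; push_cast; ring]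
    rw [abs_of_nonneg (by linarith), abs_of_nonneg (by linarith)]
    ring
  · have hru : |r| = -r := abs_of_nonpos hs
    rw [hru] at hl hrr
    have e1 : f (u + h) = |u + h - ((round u : ℤ) : ℝ)| := by
      apply f_eq_abs
      rw [show u + h - ((round u : ℤ) : ℝ) = r + h by rw [hr]; push_cast; ring]
      rw [abs_le]; constructor <;> linarith
    have e2 : f (u - h) = |u - h - ((round u : ℤ) : ℝ)| := by
      apply f_eq_abs
      rw [show u - h - ((round u : ℤ) : ℝ) = r - h by rw [hr]; push_cast; ring]
      rw [abs_le]; constructor <;> linarith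
    rw [e1, e2, hfu, hru]
    rw [show u + h - ((round u : ℤ) : ℝ) = r + h by rw [hr]; push_cast; ring]
    rw [show u - h - ((round u : ℤ) : ℝ) = r - h by rw [hr]; push_cast; ring]
    rw [abs_of_nonpos (by linarith), abs_of_nonpos (by linarith)]
    ring

/-- If `1/2 - h ≤ f u`, `0 ≤ h ≤ 1/4`, then `f (u+h) + f (u-h) = 1 - 2h`. -/
lemma sum_far (u h : ℝ) (h0 : 0 ≤ h) (h4 : h ≤ 1 / 4) (hc : 1 / 2 - h ≤ f u) :
    f (u + h) + f (u - h) = 1 - 2 * h := by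
  have hv : f (u + 1 / 2) ≤ h := by
    rw [f_half u]; linarith
  have hs := sum_near (u + 1 / 2) h h0 h4 hv
  rw [show u + 1 / 2 + h = u + h + 1 / 2 by ring, show u + 1 / 2 - h = u - h + 1 / 2 by ring,
    f_half (u + h), f_half (u - h)] at hs
  linarith

/-- Key elementary inequality for `h ≤ 1/4`. -/
lemma key1 (u h : ℝ) (h0 : 0 ≤ h) (h4 : h ≤ 1 / 4) :
    f u - (f (u + h) + f (u - h)) / 2 + min (2 * h) (f (2 * u)) / 2 ≤ min h (f u) := by
  have hf0 := f_nonneg u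
  rcases le_total (f u) h with c1 | c1
  · have hs := sum_near u h h0 h4 c1
    have hm : min (2 * h) (f (2 * u)) ≤ 2 * h := min_le_left _ _
    have hmin : min h (f u) = f u := min_eq_right c1
    linarith
  · rcases le_total (f u) (1 / 2 - h) with c2 | c2
    · have hs := sum_mid u h h0 c1 c2
      have hm : min (2 * h) (f (2 * u)) ≤ 2 * h := min_le_left _ _
      have hmin : min h (f u) = h := min_eq_left c1
      linarith
    · have hq : (1 : ℝ) / 4 ≤ f u := by linarith
      have hd := f_double_ge u hq
      have hs := sum_far u h h0 h4 c2
      have hm : min (2 * h) (f (2 * u)) ≤ f (2 * u) := min_le_right _ _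
      have hmin : min h (f u) = h := min_eq_left c1
      linarith

/-- Key elementary inequality for `1/4 ≤ h ≤ 1/2`. -/
lemma key2 (u h : ℝ) (h4 : 1 / 4 ≤ h) (h12 : h ≤ 1 / 2) :
    f u - (f (u + h) + f (u - h)) / 2 + (f (2 * u) - f (2 * u + 1 / 2)) / 2
      + min (2 * h - 1 / 2) (f (2 * u + 1 / 2)) / 2 ≤ min h (f u) := by
  have hf0 := f_nonneg u
  have hf2 := f_le_half u
  have hv : f (u + 1 / 2) = 1 / 2 - f u := f_half u
  have h2u : f (2 * u + 1 / 2) = 1 / 2 - f (2 * u) := f_half (2 * u)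
  have hsum : f (u + h) + f (u - h) = f (u + 1 / 2 + (1 / 2 - h)) + f (u + 1 / 2 - (1 / 2 - h)) := by
    have a1 : f (u + 1 / 2 - (1 / 2 - h)) = f (u + h) := by congr 1; ring
    have a2 : f (u + 1 / 2 + (1 / 2 - h)) = f (u - h) := by
      rw [show u + 1 / 2 + (1 / 2 - h) = u - h + ((1 : ℤ) : ℝ) by push_cast; ring]
      exact f_int_add (u - h) 1
    rw [a1, a2]; ring
  set g : ℝ := 1 / 2 - h with hg
  have hg0 : 0 ≤ g := by rw [hg]; linarith
  have hg4 : g ≤ 1 / 4 := by rw [hg]; linarith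
  rcases le_total (f (u + 1 / 2)) g with c1 | c1
  · -- near an integer after half-shift: f u ≥ h
    have hs := sum_near (u + 1 / 2) g hg0 hg4 c1
    have hq : (1 : ℝ) / 4 ≤ f u := by rw [hv] at c1; linarith
    have hd := f_double_ge u hq
    have hm : min (2 * h - 1 / 2) (f (2 * u + 1 / 2)) ≤ 2 * h - 1 / 2 := min_le_left _ _
    apply le_min
    · linarith
    · linarith
  · rcases le_total (f (u + 1 / 2)) (1 / 2 - g) with c2 | c2
    · have hs := sum_mid (u + 1 / 2) g hg0 c1 (by linarith)
      rcases le_total (f u) (1 / 4) with c3 | c3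
      · have hd := f_double_le u c3
        rcases le_total (2 * h - 1 / 2) (f (2 * u + 1 / 2)) with c4 | c4
        · rw [min_eq_left c4]; apply le_min <;> linarith
        · rw [min_eq_right c4]; apply le_min <;> linarith
      · have hd := f_double_ge u c3
        rcases le_total (2 * h - 1 / 2) (f (2 * u + 1 / 2)) with c4 | c4
        · rw [min_eq_left c4]; apply le_min <;> linarith
        · rw [min_eq_right c4]; apply le_min <;> linarith
    · have hs := sum_far (u + 1 / 2) g hg0 hg4 c2
      have hq : f u ≤ 1 / 4 := by rw [hv] at c2; linarith
      have hd := f_double_le u hq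
      rcases le_total (2 * h - 1 / 2) (f (2 * u + 1 / 2)) with c4 | c4
      · rw [min_eq_left c4]; apply le_min <;> linarith
      · rw [min_eq_right c4]; apply le_min <;> linarith

/-- The Takagi function as a clean series. -/
noncomputable def TT (x : ℝ) : ℝ :=
  ∑' k : ℕ, ((2 : ℝ) ^ k)⁻¹ * nearestIntDist ((2 : ℝ) ^ k * x)

lemma summable_TT (x : ℝ) :
    Summable (fun k : ℕ => ((2 : ℝ) ^ k)⁻¹ * nearestIntDist ((2 : ℝ) ^ k * x)) := by
  apply Summable.of_nonneg_of_le
    (fun k => mul_nonneg (by positivity) (f_nonneg _))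
    (fun k => ?_)
    (summable_geometric_of_lt_one (by norm_num : (0:ℝ) ≤ 1/2) (by norm_num))
  have h1 : f ((2:ℝ) ^ k * x) ≤ 1 := le_trans (f_le_half _) (by norm_num)
  have h2 : ((1:ℝ)/2) ^ k = ((2:ℝ) ^ k)⁻¹ := by
    rw [one_div, inv_pow]
  rw [h2]
  calc ((2:ℝ) ^ k)⁻¹ * f ((2:ℝ) ^ k * x) ≤ ((2:ℝ) ^ k)⁻¹ * 1 := by
        apply mul_le_mul_of_nonneg_left h1 (by positivity)
    _ = ((2:ℝ) ^ k)⁻¹ := mul_one _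

lemma omega_eq (x : ℝ) : omegaT 2 x = TT x := by
  unfold omegaT TT
  apply tsum_congr
  intro k
  have h2 : ((2 : ℕ) : ℝ) = (2 : ℝ) := by norm_num
  rw [h2]
  congr 1
  apply min_eq_left
  calc nearestIntDist ((2:ℝ) ^ k * x) ≤ 1 / 2 := f_le_half _
    _ = 1 / (2:ℝ) := by norm_num

lemma TT_nonneg (x : ℝ) : 0 ≤ TT x :=
  tsum_nonneg fun k => mul_nonneg (by positivity) (f_nonneg _)

lemma TT_le_one (x : ℝ) : TT x ≤ 1 := by
  have hb : ∀ k : ℕ, ((2:ℝ) ^ k)⁻¹ * f ((2:ℝ) ^ k * x) ≤ ((1:ℝ)/2) ^ k * (1/2) := by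
    intro k
    have h2 : ((1:ℝ)/2) ^ k = ((2:ℝ) ^ k)⁻¹ := by rw [one_div, inv_pow]
    rw [h2]
    exact mul_le_mul_of_nonneg_left (f_le_half _) (by positivity)
  have hs2 : Summable (fun k : ℕ => ((1:ℝ)/2) ^ k * (1/2)) :=
    (summable_geometric_of_lt_one (by norm_num : (0:ℝ) ≤ 1/2) (by norm_num)).mul_right _
  have := Summable.tsum_le_tsum hb (summable_TT x) hs2
  rw [tsum_mul_right, tsum_geometric_of_lt_one (by norm_num : (0:ℝ) ≤ 1/2) (by norm_num)] at this
  unfold TT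
  calc (∑' k : ℕ, ((2:ℝ) ^ k)⁻¹ * f ((2:ℝ) ^ k * x)) ≤ (1 - 1/2)⁻¹ * (1/2) := this
    _ = 1 := by norm_num

lemma TT_rec (x : ℝ) : TT x = f x + TT (2 * x) / 2 := by
  have hs := summable_TT x
  have h0 : TT x = ((2:ℝ) ^ (0:ℕ))⁻¹ * f ((2:ℝ) ^ (0:ℕ) * x)
      + ∑' k : ℕ, ((2:ℝ) ^ (k+1))⁻¹ * f ((2:ℝ) ^ (k+1) * x) := by
    unfold TT
    exact Summable.tsum_eq_zero_add hs
  have hterm : ∀ k : ℕ, ((2:ℝ) ^ (k+1))⁻¹ * f ((2:ℝ) ^ (k+1) * x)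
      = (1/2) * (((2:ℝ) ^ k)⁻¹ * f ((2:ℝ) ^ k * (2 * x))) := by
    intro k
    have ha : (2:ℝ) ^ (k+1) * x = (2:ℝ) ^ k * (2 * x) := by ring
    rw [ha, pow_succ, mul_inv]
    ring
  rw [h0, tsum_congr hterm, tsum_mul_left]
  unfold TT
  simp only [pow_zero, inv_one, one_mul]
  ring

lemma TT_int_add (x : ℝ) (n : ℤ) : TT (x + (n : ℝ)) = TT x := by
  unfold TT
  apply tsum_congr
  intro k
  congr 1
  have ha : (2:ℝ) ^ k * (x + (n:ℝ)) = (2:ℝ) ^ k * x + (((2^k * n : ℤ)) : ℝ) := by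
    push_cast; ring
  rw [ha, f_int_add]

lemma TT_half (x : ℝ) : TT (x + 1 / 2) = TT x - f x + f (x + 1 / 2) := by
  have h1 := TT_rec (x + 1 / 2)
  have h2 := TT_rec x
  have ha : 2 * (x + 1 / 2) = 2 * x + ((1:ℤ):ℝ) := by push_cast; ring
  rw [ha, TT_int_add] at h1
  linarith

/-- The symmetric second-difference functional. -/
noncomputable def DD (u h : ℝ) : ℝ := TT u - (TT (u + h) + TT (u - h)) / 2

lemma DD_rec (u h : ℝ) :
    DD u h = (f u - (f (u + h) + f (u - h)) / 2) + DD (2 * u) (2 * h) / 2 := by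
  unfold DD
  rw [TT_rec u, TT_rec (u + h), TT_rec (u - h),
    show 2 * (u + h) = 2 * u + 2 * h by ring,
    show 2 * (u - h) = 2 * u - 2 * h by ring]
  ring

lemma DD_shift (u h : ℝ) :
    DD u h = (f u - f (u + 1 / 2)) + DD (u + 1 / 2) (h - 1 / 2) := by
  unfold DD
  have e1 : u + 1 / 2 + (h - 1 / 2) = u + h := by ring
  have e2 : TT (u + 1 / 2 - (h - 1 / 2)) = TT (u - h) := by
    rw [show u + 1 / 2 - (h - 1 / 2) = (u - h) + ((1:ℤ):ℝ) by push_cast; ring, TT_int_add]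
  rw [e1, e2, TT_half u]
  ring

lemma main_aux : ∀ (n : ℕ) (u h : ℝ), 0 ≤ h → h ≤ 1 / 2 →
    DD u h ≤ min h (f u) + (1/2 : ℝ) ^ n := by
  intro n
  induction n with
  | zero =>
    intro u h h0 h12
    have h1 : DD u h ≤ TT u := by
      unfold DD
      have := TT_nonneg (u + h)
      have := TT_nonneg (u - h)
      linarith
    have h2 : (0:ℝ) ≤ min h (f u) := le_min h0 (f_nonneg u)
    have h3 := TT_le_one u
    simp only [pow_zero]
    linarith
  | succ n ih =>
    intro u h h0 h12
    have hp : ((1:ℝ)/2) ^ (n+1) = (1/2:ℝ) ^ n / 2 := by rw [pow_succ]; ring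
    rcases le_total h (1/4) with hc | hc
    · have ih2 := ih (2 * u) (2 * h) (by linarith) (by linarith)
      have key := key1 u h h0 hc
      have hrec := DD_rec u h
      rw [hp]
      linarith
    · have key := key2 u h hc h12
      have hrec := DD_rec u h
      have sh := DD_shift (2 * u) (2 * h)
      have ih2 := ih (2 * u + 1 / 2) (2 * h - 1 / 2) (by linarith) (by linarith)
      have hfn : 0 ≤ f (2 * u + 1 / 2) := f_nonneg _
      rw [hp]
      linarith

lemma D_le_min (u h : ℝ) (h0 : 0 ≤ h) (h12 : h ≤ 1 / 2) : DD u h ≤ min h (f u) := by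
  by_contra hlt
  push_neg at hlt
  obtain ⟨n, hn⟩ := exists_pow_lt_of_lt_one (sub_pos.mpr hlt) (by norm_num : (1:ℝ)/2 < 1)
  have := main_aux n u h h0 h12
  linarith

lemma D_le (u h : ℝ) (h0 : 0 ≤ h) : DD u h ≤ h := by
  rcases le_total h (1/2) with c1 | c1
  · have := D_le_min u h h0 c1
    have : min h (f u) ≤ h := min_le_left _ _
    linarith [D_le_min u h h0 c1]
  · rcases le_total h 1 with c2 | c2
    · have hsh := DD_shift u h
      have hm := D_le_min (u + 1/2) (h - 1/2) (by linarith) (by linarith)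
      have h1 : min (h - 1/2) (f (u + 1/2)) ≤ h - 1/2 := min_le_left _ _
      have h2 := f_le_half u
      have h3 := f_nonneg (u + 1/2)
      linarith
    · have h1 : DD u h ≤ TT u := by
        unfold DD
        have := TT_nonneg (u + h)
        have := TT_nonneg (u - h)
        linarith
      have := TT_le_one u
      linarith

end BorosPales

/-- The Boros–Páles inequality for the Takagi function. -/
theorem stmt3 (x₁ x₂ : ℝ) :
    omegaT 2 ((x₁ + x₂) / 2)
      ≤ (omegaT 2 x₁ + omegaT 2 x₂) / 2 + (1 / 2) * |x₁ - x₂| := by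
  rw [BorosPales.omega_eq, BorosPales.omega_eq, BorosPales.omega_eq]
  rcases le_total x₂ x₁ with hle | hle
  · have habs : |x₁ - x₂| = x₁ - x₂ := abs_of_nonneg (by linarith)
    have hD := BorosPales.D_le ((x₁ + x₂)/2) ((x₁ - x₂)/2) (by linarith)
    unfold BorosPales.DD at hD
    rw [show (x₁ + x₂)/2 + (x₁ - x₂)/2 = x₁ by ring,
      show (x₁ + x₂)/2 - (x₁ - x₂)/2 = x₂ by ring] at hD
    rw [habs]
    linarith
  · have habs : |x₁ - x₂| = x₂ - x₁ := by
      rw [abs_sub_comm]; exact abs_of_nonneg (by linarith)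
    have hD := BorosPales.D_le ((x₁ + x₂)/2) ((x₂ - x₁)/2) (by linarith)
    unfold BorosPales.DD at hD
    rw [show (x₁ + x₂)/2 + (x₂ - x₁)/2 = x₂ by ring,
      show (x₁ + x₂)/2 - (x₂ - x₁)/2 = x₁ by ring] at hD
    rw [habs]
    linarith
end

section
/- For all real numbers x_1, x_2 and every λ ∈ [0,1], ω_2(λx_1 + (1−λ)x_2) ≤ λ·ω_2(x_1) + (1−λ)·ω_2(x_2) + ω_2(λ)·|x_1 − x_2|. -/
namespace TakagiAux

noncomputable abbrev d (x : ℝ) : ℝ := nearestIntDist x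

lemma d_round (x : ℝ) : d x = |x - (round x : ℝ)| := rfl

lemma d_nonneg (x : ℝ) : 0 ≤ d x := abs_nonneg _

lemma d_le_half (x : ℝ) : d x ≤ 1/2 := by
  simpa [nearestIntDist] using abs_sub_round x

lemma d_le_int (x : ℝ) (n : ℤ) : d x ≤ |x - n| := by
  rcases eq_or_ne n (round x) with rfl | hn
  · simp [nearestIntDist]
  · have h1 : (1:ℝ) ≤ |(round x : ℝ) - n| := by
      have hne : round x - n ≠ 0 := sub_ne_zero.mpr (Ne.symm hn)
      have := Int.one_le_abs hne
      have : ((1:ℤ):ℝ) ≤ ((|round x - n| : ℤ) : ℝ) := by exact_mod_cast this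
      simpa [Int.cast_abs] using this
    have h2 : |x - (round x:ℝ)| ≤ 1/2 := abs_sub_round x
    have h3 : |(round x:ℝ) - n| ≤ |(round x:ℝ) - x| + |x - n| := abs_sub_le _ _ _
    have h4 : |(round x:ℝ) - x| = |x - (round x:ℝ)| := abs_sub_comm _ _
    have : (1:ℝ)/2 ≤ |x - n| := by linarith [h3, h4 ▸ h3]
    calc d x ≤ 1/2 := d_le_half x
    _ ≤ |x - n| := this

lemma d_add_int (x : ℝ) (n : ℤ) : d (x + n) = d x := by
  apply le_antisymm
  · calc d (x + n) ≤ |x + n - (round x + n : ℤ)| := d_le_int _ _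
      _ = |x - round x| := by push_cast; ring_nf
      _ = d x := rfl
  · calc d x ≤ |x - (round (x + (n:ℝ)) - n : ℤ)| := d_le_int _ _
      _ = |x + n - round (x + (n:ℝ))| := by push_cast; ring_nf
      _ = d (x + n) := rfl

lemma d_neg (x : ℝ) : d (-x) = d x := by
  apply le_antisymm
  · calc d (-x) ≤ |-x - ((-(round x)) : ℤ)| := d_le_int _ _
      _ = |x - round x| := by push_cast; rw [← abs_neg]; ring_nf
      _ = d x := rfl
  · calc d x ≤ |x - ((-(round (-x))) : ℤ)| := d_le_int _ _
      _ = |-x - round (-x)| := by push_cast; rw [← abs_neg]; ring_nf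
      _ = d (-x) := rfl

lemma d_le_abs (x : ℝ) : d x ≤ |x| := by simpa using d_le_int x 0

lemma d_eq_abs (x : ℝ) (hx : |x| ≤ 1/2) : d x = |x| := by
  refine le_antisymm (d_le_abs x) ?_
  have : ∀ n : ℤ, |x| ≤ |x - n| := by
    intro n
    rcases eq_or_ne n 0 with rfl | hn
    · simp
    · have h1 : (1:ℝ) ≤ |(n:ℝ)| := by
        have := Int.one_le_abs hn
        have : ((1:ℤ):ℝ) ≤ ((|n| : ℤ) : ℝ) := by exact_mod_cast this
        simpa [Int.cast_abs] using this
      have : |(n:ℝ)| ≤ |x| + |x - n| := by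
        calc |(n:ℝ)| = |x - (x - n)| := by ring_nf
        _ ≤ |x| + |x - n| := abs_sub _ _
      linarith
  calc |x| ≤ |x - round x| := this _
  _ = d x := rfl

lemma d_eq_of_unit (x : ℝ) (h0 : 0 ≤ x) (h1 : x ≤ 1) : d x = min x (1 - x) := by
  rcases le_total x (1/2) with h | h
  · rw [d_eq_abs x (by rw [abs_of_nonneg h0]; exact h), abs_of_nonneg h0,
      min_eq_left (by linarith)]
  · have : d x = d (x - 1 + (1:ℤ)) := by norm_num
    rw [this, d_add_int, d_eq_abs _ (by rw [abs_of_nonpos (by linarith)]; linarith),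
      abs_of_nonpos (by linarith), min_eq_right (by linarith)]
    ring

lemma d_subadd (x y : ℝ) : d (x + y) ≤ d x + d y := by
  calc d (x + y) ≤ |x + y - (round x + round y : ℤ)| := d_le_int _ _
  _ = |(x - round x) + (y - round y)| := by push_cast; ring_nf
  _ ≤ |x - round x| + |y - round y| := abs_add_le _ _

lemma d_double (x : ℝ) : d (2 * x) = min (2 * d x) (1 - 2 * d x) := by
  have hr : |x - (round x:ℝ)| ≤ 1/2 := abs_sub_round x
  set r : ℝ := x - round x with hrdef
  have h1 : d (2 * x) = d (2 * r) := by
    have : 2 * x = 2 * r + ((2 * round x : ℤ) : ℝ) := by push_cast; ring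
    rw [this, d_add_int]
  have h2 : d (2*r) = d (2*|r|) := by
    rcases abs_cases r with ⟨he, h0⟩ | ⟨he, h0⟩
    · rw [he]
    · rw [he, ← d_neg]; ring_nf
  rw [h1, h2, d_eq_of_unit _ (by positivity) (by rcases abs_le.mp hr with ⟨a,b⟩; rcases abs_cases r with ⟨he,h0⟩|⟨he,h0⟩ <;> linarith)]
  have : d x = |r| := rfl
  rw [this]

set_option maxHeartbeats 1000000 in
lemma pw1 (r h : ℝ) (hr0 : 0 ≤ r) (hr : r ≤ 1/2) (h0 : 0 ≤ h) (hh : h ≤ 1/4) :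
    max 0 (max (2*h/2 - (1/2 - r)) (2*h - 2*r))
    ≤ (min (r+h) (1-(r+h)) + |r-h|)/2 - r
      + (max 0 (max ((min (4*h) (1-4*h))/2 - (1/2 - min (2*r) (1-2*r))) (4*h - 2 * min (2*r) (1-2*r))))/2 := by
  have m0 : (0:ℝ) ≤ max 0 (max ((min (4*h) (1-4*h))/2 - (1/2 - min (2*r) (1-2*r))) (4*h - 2 * min (2*r) (1-2*r))) := le_max_left _ _
  have mC : (min (4*h) (1-4*h))/2 - (1/2 - min (2*r) (1-2*r)) ≤ max 0 (max ((min (4*h) (1-4*h))/2 - (1/2 - min (2*r) (1-2*r))) (4*h - 2 * min (2*r) (1-2*r))) := le_trans (le_max_left _ _) (le_max_right _ _)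
  have mD : 4*h - 2 * min (2*r) (1-2*r) ≤ max 0 (max ((min (4*h) (1-4*h))/2 - (1/2 - min (2*r) (1-2*r))) (4*h - 2 * min (2*r) (1-2*r))) := le_trans (le_max_right _ _) (le_max_right _ _)
  rcases abs_cases (r-h) with ⟨e1, c1⟩ | ⟨e1, c1⟩ <;>
  rcases min_cases (r+h) (1-(r+h)) with ⟨e2, c2⟩ | ⟨e2, c2⟩ <;>
  rcases min_cases (4*h) (1-4*h) with ⟨e3, c3⟩ | ⟨e3, c3⟩ <;>
  rcases min_cases (2*r) (1-2*r) with ⟨e4, c4⟩ | ⟨e4, c4⟩ <;>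
  exact max_le (by linarith) (max_le (by linarith) (by linarith))

set_option maxHeartbeats 1000000 in
lemma pw2 (r h : ℝ) (hr0 : 0 ≤ r) (hr : r ≤ 1/2) (h0 : 1/4 ≤ h) (hh : h ≤ 1/2) :
    max 0 (max ((1-2*h)/2 - (1/2 - r)) (2*h - 2*r))
    ≤ (2*h - 2*r) + ((min (r+h) (1-(r+h)) + |r-h|)/2 - (1/2 - r))
      + (max 0 (max ((min (2-4*h) (4*h-1))/2 - (1/2 - min (2*r) (1-2*r))) (2-4*h - 2 * min (2*r) (1-2*r))))/2 := by
  have m0 : (0:ℝ) ≤ max 0 (max ((min (2-4*h) (4*h-1))/2 - (1/2 - min (2*r) (1-2*r))) (2-4*h - 2 * min (2*r) (1-2*r))) := le_max_left _ _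
  have mC : (min (2-4*h) (4*h-1))/2 - (1/2 - min (2*r) (1-2*r)) ≤ max 0 (max ((min (2-4*h) (4*h-1))/2 - (1/2 - min (2*r) (1-2*r))) (2-4*h - 2 * min (2*r) (1-2*r))) := le_trans (le_max_left _ _) (le_max_right _ _)
  have mD : 2-4*h - 2 * min (2*r) (1-2*r) ≤ max 0 (max ((min (2-4*h) (4*h-1))/2 - (1/2 - min (2*r) (1-2*r))) (2-4*h - 2 * min (2*r) (1-2*r))) := le_trans (le_max_right _ _) (le_max_right _ _)
  rcases abs_cases (r-h) with ⟨e1, c1⟩ | ⟨e1, c1⟩ <;>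
  rcases min_cases (r+h) (1-(r+h)) with ⟨e2, c2⟩ | ⟨e2, c2⟩ <;>
  rcases min_cases (2-4*h) (4*h-1) with ⟨e3, c3⟩ | ⟨e3, c3⟩ <;>
  rcases min_cases (2*r) (1-2*r) with ⟨e4, c4⟩ | ⟨e4, c4⟩ <;>
  exact max_le (by linarith) (max_le (by linarith) (by linarith))

noncomputable def T (x : ℝ) : ℝ := ∑' k : ℕ, ((2:ℝ) ^ k)⁻¹ * d ((2:ℝ) ^ k * x)

lemma T_term_le (x : ℝ) (k : ℕ) : ((2:ℝ) ^ k)⁻¹ * d ((2:ℝ) ^ k * x) ≤ (1/2 : ℝ)^k * (1/2) := by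
  rw [one_div, inv_pow]
  have := d_le_half ((2:ℝ)^k * x)
  have h2 : ((2:ℝ)^k)⁻¹ ≥ 0 := by positivity
  nlinarith

lemma T_term_nonneg (x : ℝ) (k : ℕ) : 0 ≤ ((2:ℝ) ^ k)⁻¹ * d ((2:ℝ) ^ k * x) := by
  have := d_nonneg ((2:ℝ)^k * x); positivity

lemma T_summable (x : ℝ) : Summable (fun k : ℕ => ((2:ℝ) ^ k)⁻¹ * d ((2:ℝ) ^ k * x)) := by
  apply Summable.of_nonneg_of_le (T_term_nonneg x) (T_term_le x)
  exact summable_geometric_two.mul_right _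

lemma omegaT_two (x : ℝ) : omegaT 2 x = T x := by
  unfold omegaT T
  congr 1; funext k
  norm_num
  simpa using d_le_half ((2:ℝ)^k * x)

lemma T_nonneg (x : ℝ) : 0 ≤ T x := tsum_nonneg (T_term_nonneg x)

lemma T_le_one (x : ℝ) : T x ≤ 1 := by
  calc T x ≤ ∑' k : ℕ, (1/2:ℝ)^k * (1/2) :=
        Summable.tsum_le_tsum (T_term_le x) (T_summable x) (summable_geometric_two.mul_right _)
  _ = 2 * (1/2) := by rw [tsum_mul_right, tsum_geometric_two]
  _ = 1 := by norm_num

lemma T_rec (x : ℝ) : T x = d x + T (2 * x) / 2 := by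
  unfold T
  rw [Summable.tsum_eq_zero_add (T_summable x)]
  simp only [pow_zero, inv_one, one_mul]
  congr 1
  rw [← tsum_div_const]
  congr 1; funext k
  rw [pow_succ]
  field_simp

lemma T_periodic (x : ℝ) : T (x + 1) = T x := by
  unfold T
  congr 1; funext k
  congr 1
  have : (2:ℝ)^k * (x + 1) = 2^k * x + ((2^k : ℤ) : ℝ) := by push_cast; ring
  rw [this, d_add_int]

lemma T_int_shift (x : ℝ) (n : ℤ) : T (x + n) = T x := by
  unfold T
  congr 1; funext k
  congr 1
  have : (2:ℝ)^k * (x + n) = 2^k * x + ((2^k * n : ℤ) : ℝ) := by push_cast; ring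
  rw [this, d_add_int]

lemma T_neg (x : ℝ) : T (-x) = T x := by
  unfold T
  congr 1; funext k
  congr 1
  have : (2:ℝ)^k * (-x) = -(2^k * x) := by ring
  rw [this, d_neg]

lemma T_subadd (x y : ℝ) : T (x + y) ≤ T x + T y := by
  unfold T
  rw [← Summable.tsum_add (T_summable x) (T_summable y)]
  apply Summable.tsum_le_tsum _ (T_summable (x+y)) ((T_summable x).add (T_summable y))
  intro k
  rw [← mul_add]
  apply mul_le_mul_of_nonneg_left _ (by positivity)
  have : (2:ℝ)^k * (x + y) = 2^k * x + 2^k * y := by ring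
  rw [this]; exact d_subadd _ _

lemma d_lipschitz (a b : ℝ) : |d a - d b| ≤ |a - b| := by
  have h1 : d a ≤ d b + |a - b| := by
    have : d a = d (b + (a - b)) := by ring_nf
    rw [this]
    calc d (b + (a-b)) ≤ d b + d (a-b) := d_subadd _ _
    _ ≤ d b + |a - b| := by linarith [d_le_abs (a-b)]
  have h2 : d b ≤ d a + |a - b| := by
    have : d b = d (a + (b - a)) := by ring_nf
    rw [this]
    calc d (a + (b-a)) ≤ d a + d (b-a) := d_subadd _ _
    _ ≤ d a + |a - b| := by rw [abs_sub_comm a b]; linarith [d_le_abs (b-a)]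
  rw [abs_sub_le_iff]; constructor <;> linarith

lemma d_continuous : Continuous d := by
  rw [Metric.continuous_iff]
  intro b ε hε
  exact ⟨ε, hε, fun a ha => by
    rw [Real.dist_eq] at *
    exact lt_of_le_of_lt (d_lipschitz a b) ha⟩

lemma T_continuous : Continuous T := by
  apply continuous_tsum (u := fun k : ℕ => (1/2:ℝ)^k)
  · intro k
    exact continuous_const.mul (d_continuous.comp (continuous_const.mul continuous_id))
  · exact summable_geometric_two
  · intro k x
    rw [Real.norm_eq_abs, abs_of_nonneg (T_term_nonneg x k)]
    calc ((2:ℝ) ^ k)⁻¹ * d ((2:ℝ) ^ k * x) ≤ (1/2:ℝ)^k * (1/2) := T_term_le x k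
    _ ≤ (1/2:ℝ)^k := by nlinarith [pow_nonneg (by norm_num : (0:ℝ) ≤ 1/2) k]

noncomputable def E (s h : ℝ) : ℝ := (T (s+h) + T (s-h))/2 + h - T s

noncomputable def G (s h : ℝ) : ℝ :=
  max 0 (max (d (2*h) / 2 - (1/2 - d s)) (2*h - 2 * d s))

lemma E_rec (s h : ℝ) : E s h = (d (s+h) + d (s-h))/2 - d s + E (2*s) (2*h) / 2 := by
  have h1 := T_rec (s+h); have h2 := T_rec (s-h); have h3 := T_rec s
  rw [show 2*(s+h) = 2*s+2*h by ring] at h1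
  rw [show 2*(s-h) = 2*s-2*h by ring] at h2
  unfold E
  rw [h1, h2, h3]; ring

lemma E_reflect (s h : ℝ) :
    E s h = 2*h - 2*d s + ((d (s+h) + d (s-h))/2 - (1/2 - d s)) + E (2*s) (1-2*h) / 2 := by
  have p1 : T (2*s + (1-2*h)) = T (s-h) + T (s-h) - 2 * d (s-h) := by
    rw [show 2*s + (1-2*h) = 2*(s-h) + 1 by ring, T_periodic]
    have := T_rec (s-h); linarith
  have p2 : T (2*s - (1-2*h)) = T (s+h) + T (s+h) - 2 * d (s+h) := by
    rw [show 2*s - (1-2*h) = 2*(s+h) + ((-1 : ℤ) : ℝ) by push_cast; ring, T_int_shift]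
    have := T_rec (s+h); linarith
  have p3 : T (2*s) = T s + T s - 2 * d s := by have := T_rec s; linarith
  unfold E
  rw [p1, p2, p3]; ring

lemma normal_form (s h : ℝ) (h0 : 0 ≤ h) (hh : h ≤ 1/2) :
    ∃ r, 0 ≤ r ∧ r ≤ 1/2 ∧ d s = r ∧
      d (s+h) + d (s-h) = min (r+h) (1-(r+h)) + |r-h| := by
  set q : ℝ := s - round s with hq
  have hq2 : |q| ≤ 1/2 := by rw [hq]; exact abs_sub_round s
  have hds : d s = |q| := by rw [d_round]
  have hsp : d (s+h) = d (q+h) := by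
    rw [show s + h = q + h + (round s : ℤ) by rw [hq]; push_cast; ring, d_add_int]
  have hsm : d (s-h) = d (q-h) := by
    rw [show s - h = q - h + (round s : ℤ) by rw [hq]; push_cast; ring, d_add_int]
  rcases abs_le.mp hq2 with ⟨hqa, hqb⟩
  rcases le_or_gt 0 q with hq0 | hq0
  · refine ⟨q, hq0, hqb, by rw [hds, abs_of_nonneg hq0], ?_⟩
    rw [hsp, hsm, d_eq_of_unit (q+h) (by linarith) (by linarith),
      d_eq_abs (q-h) (by rw [abs_le]; constructor <;> linarith)]
  · refine ⟨-q, by linarith, by linarith, by rw [hds, abs_of_neg hq0], ?_⟩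
    rw [hsp, hsm, show q + h = -(-q - h) by ring, show q - h = -(-q + h) by ring,
      d_neg, d_neg, d_eq_of_unit (-q+h) (by linarith) (by linarith),
      d_eq_abs (-q-h) (by rw [abs_le]; constructor <;> linarith)]
    ring

lemma G_nonneg (s h : ℝ) : 0 ≤ G s h := le_max_left _ _

lemma G_le_one (s h : ℝ) (hh : h ≤ 1/2) : G s h ≤ 1 := by
  have h1 := d_le_half (2*h); have h2 := d_nonneg s; have h3 := d_le_half s
  unfold G
  apply max_le (by norm_num) (max_le (by linarith) (by linarith))

lemma EG (n : ℕ) : ∀ s h : ℝ, 0 ≤ h → h ≤ 1/2 → G s h - 2*(1/2)^n ≤ E s h := by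
  induction n with
  | zero =>
    intro s h h0 hh
    have := G_le_one s h hh
    have e1 := T_nonneg (s+h); have e2 := T_nonneg (s-h); have e3 := T_le_one s
    unfold E; norm_num at this ⊢; linarith
  | succ n ih =>
    intro s h h0 hh
    obtain ⟨r, hr0, hr1, hds, hsum⟩ := normal_form s h h0 hh
    rcases le_total h (1/4) with hcase | hcase
    · have key : G s h ≤ (d (s+h) + d (s-h))/2 - d s + G (2*s) (2*h) / 2 := by
        unfold G
        rw [hds, hsum, d_double s, hds,
          d_eq_abs (2*h) (by rw [abs_of_nonneg (by linarith)]; linarith),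
          abs_of_nonneg (by linarith : (0:ℝ) ≤ 2*h),
          d_eq_of_unit (2*(2*h)) (by linarith) (by linarith),
          show 2*(2*h) = 4*h by ring, show (1:ℝ) - 4*h = 1-4*h by ring]
        exact pw1 r h hr0 hr1 h0 hcase
      have ihh := ih (2*s) (2*h) (by linarith) (by linarith)
      have := E_rec s h
      rw [show (2:ℝ)*(1/2)^(n+1) = (2*(1/2)^n)/2 by ring]
      linarith
    · have key : G s h ≤ 2*h - 2*d s + ((d (s+h) + d (s-h))/2 - (1/2 - d s))
          + G (2*s) (1-2*h) / 2 := by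
        unfold G
        rw [hds, hsum, d_double s, hds,
          d_eq_of_unit (2*h) (by linarith) (by linarith),
          min_eq_right (by linarith : (1:ℝ) - 2*h ≤ 2*h),
          d_eq_of_unit (2*(1-2*h)) (by linarith) (by linarith),
          show 2*(1-2*h) = 2-4*h by ring, show (1:ℝ) - (2-4*h) = 4*h-1 by ring]
        exact pw2 r h hr0 hr1 hcase hh
      have ihh := ih (2*s) (1-2*h) (by linarith) (by linarith)
      have := E_reflect s h
      rw [show (2:ℝ)*(1/2)^(n+1) = (2*(1/2)^n)/2 by ring]
      linarith

lemma E_nonneg (s h : ℝ) (h0 : 0 ≤ h) : 0 ≤ E s h := by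
  rcases le_total h (1/2) with hh | hh
  · have hlim : Filter.Tendsto (fun n : ℕ => G s h - 2*(1/2)^n) Filter.atTop (nhds (G s h - 2*0)) := by
      exact (tendsto_const_nhds.sub ((tendsto_pow_atTop_nhds_zero_of_lt_one (by norm_num) (by norm_num)).const_mul 2))
    have : G s h - 2*0 ≤ E s h :=
      le_of_tendsto hlim (Filter.Eventually.of_forall (fun n => EG n s h h0 hh))
    have := G_nonneg s h
    linarith
  · have h1 : T (2*s) ≤ T (s+h) + T (s-h) := by
      rw [show 2*s = (s+h) + (s-h) by ring]; exact T_subadd _ _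
    have h2 := T_rec s
    have h3 := d_le_half s
    unfold E; linarith

lemma midpoint (x y : ℝ) : T ((x+y)/2) ≤ (T x + T y)/2 + |x-y|/2 := by
  rcases le_total y x with hxy | hxy
  · have := E_nonneg ((x+y)/2) ((x-y)/2) (by linarith)
    unfold E at this
    rw [show (x+y)/2 + (x-y)/2 = x by ring, show (x+y)/2 - (x-y)/2 = y by ring] at this
    rw [abs_of_nonneg (by linarith : (0:ℝ) ≤ x - y)]
    linarith
  · have := E_nonneg ((x+y)/2) ((y-x)/2) (by linarith)
    unfold E at this
    rw [show (x+y)/2 + (y-x)/2 = y by ring, show (x+y)/2 - (y-x)/2 = x by ring] at this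
    rw [abs_sub_comm, abs_of_nonneg (by linarith : (0:ℝ) ≤ y - x)]
    linarith

lemma d_zero : d 0 = 0 := by
  rw [d_eq_abs 0 (by norm_num)]; norm_num

lemma T_zero : T 0 = 0 := by
  have := T_rec 0
  rw [show (2:ℝ)*0 = 0 by ring, d_zero] at this
  linarith

lemma T_one_sub (l : ℝ) : T (1 - l) = T l := by
  rw [show 1 - l = -l + 1 by ring, T_periodic, T_neg]

def P (l : ℝ) : Prop :=
  ∀ x y : ℝ, T (l*x + (1-l)*y) ≤ l * T x + (1-l) * T y + T l * |x - y|

lemma P_zero : P 0 := by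
  intro x y
  rw [show (0:ℝ)*x + (1-0)*y = y by ring, T_zero]
  simp

lemma P_sym {l : ℝ} (hP : P l) : P (1 - l) := by
  intro x y
  rw [show (1-l)*x + (1-(1-l))*y = l*y + (1-l)*x by ring, T_one_sub]
  have := hP y x
  rw [abs_sub_comm y x] at this
  linarith

lemma T_halfarg (l : ℝ) (h0 : 0 ≤ l) (h1 : l ≤ 1) : T (l/2) = l/2 + T l / 2 := by
  have := T_rec (l/2)
  rw [show (2:ℝ)*(l/2) = l by ring, d_eq_abs (l/2) (by rw [abs_of_nonneg (by linarith)]; linarith),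
    abs_of_nonneg (by linarith : (0:ℝ) ≤ l/2)] at this
  exact this

lemma P_half {l : ℝ} (h0 : 0 ≤ l) (h1 : l ≤ 1) (hP : P l) : P (l/2) := by
  intro x y
  have hm := midpoint (l*x + (1-l)*y) y
  have hz := hP x y
  rw [show (l*x + (1-l)*y - y) = l*(x-y) by ring, abs_mul, abs_of_nonneg h0] at hm
  rw [show (l*x + (1-l)*y + y)/2 = l/2*x + (1-l/2)*y by ring] at hm
  rw [T_halfarg l h0 h1]
  have ha := abs_nonneg (x - y)
  nlinarith

lemma P_dyadic : ∀ n : ℕ, ∀ k : ℕ, k ≤ 2^n → P ((k:ℝ)/2^n) := by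
  intro n
  induction n with
  | zero =>
    intro k hk
    interval_cases k
    · simpa using P_zero
    · have : ((1:ℕ):ℝ)/2^0 = 1 - 0 := by norm_num
      rw [this]
      exact P_sym P_zero
  | succ n ih =>
    have half : ∀ k : ℕ, k ≤ 2^n → P ((k:ℝ)/2^(n+1)) := by
      intro k hk
      have hk1 : ((k:ℝ)/2^n) ≤ 1 := by
        rw [div_le_one (by positivity)]
        exact_mod_cast Nat.cast_le.mpr hk
      have := P_half (by positivity) hk1 (ih k hk)
      rwa [show ((k:ℝ)/2^n)/2 = (k:ℝ)/2^(n+1) by rw [pow_succ]; ring] at this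
    intro k hk
    rcases le_or_gt k (2^n) with h | h
    · exact half k h
    · have hj : 2^(n+1) - k ≤ 2^n := by omega
      have hcast : ((k:ℝ)/2^(n+1)) = 1 - ((2^(n+1) - k : ℕ):ℝ)/2^(n+1) := by
        have h2 : ((2^(n+1) - k : ℕ):ℝ) = 2^(n+1) - (k:ℝ) := by
          push_cast [Nat.cast_sub hk]; ring
        rw [h2]
        field_simp
        ring
      rw [hcast]
      exact P_sym (half _ hj)

lemma P_all {l : ℝ} (h0 : 0 ≤ l) (h1 : l ≤ 1) :
    ∀ x y : ℝ, T (l*x + (1-l)*y) ≤ l * T x + (1-l) * T y + T l * |x - y| := by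
  intro x y
  set a : ℕ → ℝ := fun n => ((⌊2^n * l⌋₊ : ℕ):ℝ)/2^n with ha
  have hP : ∀ n, P (a n) := by
    intro n
    apply P_dyadic n
    have : (2:ℝ)^n * l ≤ ((2^n : ℕ):ℝ) := by
      push_cast
      nlinarith [pow_pos (by norm_num : (0:ℝ) < 2) n]
    calc ⌊2^n * l⌋₊ ≤ ⌊((2^n : ℕ):ℝ)⌋₊ := Nat.floor_le_floor this
    _ = 2^n := Nat.floor_natCast _
  have hbound : ∀ n : ℕ, l - (1/2)^n ≤ a n ∧ a n ≤ l := by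
    intro n
    have hpos : (0:ℝ) < 2^n := by positivity
    have hfl : ((⌊2^n * l⌋₊ : ℕ):ℝ) ≤ 2^n * l := Nat.floor_le (by positivity)
    have hfl2 : 2^n * l < ((⌊2^n * l⌋₊ : ℕ):ℝ) + 1 := Nat.lt_floor_add_one _
    constructor
    · rw [ha]
      rw [div_pow, one_pow] at *
      rw [le_div_iff₀ hpos]
      have : (1:ℝ)/2^n * 2^n = 1 := by field_simp
      nlinarith
    · rw [ha, div_le_iff₀ hpos]
      linarith [hfl]
  have htend : Filter.Tendsto a Filter.atTop (nhds l) := by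
    have hlow : Filter.Tendsto (fun n : ℕ => l - (1/2:ℝ)^n) Filter.atTop (nhds (l - 0)) :=
      tendsto_const_nhds.sub
        (tendsto_pow_atTop_nhds_zero_of_lt_one (by norm_num) (by norm_num))
    rw [sub_zero] at hlow
    exact tendsto_of_tendsto_of_tendsto_of_le_of_le hlow tendsto_const_nhds
      (fun n => (hbound n).1) (fun n => (hbound n).2)
  have hLHS : Filter.Tendsto (fun n => T (a n * x + (1 - a n) * y)) Filter.atTop
      (nhds (T (l*x + (1-l)*y))) := by
    apply (T_continuous.tendsto _).comp
    exact (htend.mul tendsto_const_nhds).add ((tendsto_const_nhds.sub htend).mul tendsto_const_nhds)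
  have hRHS : Filter.Tendsto (fun n => a n * T x + (1 - a n) * T y + T (a n) * |x - y|)
      Filter.atTop (nhds (l * T x + (1-l) * T y + T l * |x - y|)) := by
    exact ((htend.mul tendsto_const_nhds).add ((tendsto_const_nhds.sub htend).mul tendsto_const_nhds)).add
      (((T_continuous.tendsto _).comp htend).mul tendsto_const_nhds)
  exact le_of_tendsto_of_tendsto' hLHS hRHS (fun n => hP n x y)

end TakagiAux

theorem stmt4 (x₁ x₂ : ℝ) {lam : ℝ} (hlam : lam ∈ Set.Icc (0 : ℝ) 1) :
    omegaT 2 (lam * x₁ + (1 - lam) * x₂)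
      ≤ lam * omegaT 2 x₁ + (1 - lam) * omegaT 2 x₂
        + omegaT 2 lam * |x₁ - x₂| := by
  obtain ⟨h0, h1⟩ := hlam
  have := TakagiAux.P_all h0 h1 x₁ x₂
  simpa only [TakagiAux.omegaT_two] using this
end

section
/- Let f : [0,1] → ℝ be concave on [0,1] with max{f(0), f(1)} ≤ 0, and suppose that f(λx_1 + (1−λ)x_2) ≤ λ·f(x_1) + (1−λ)·f(x_2) + (x_2 − x_1) holds for all λ, x_1, x_2 ∈ [0,1] with x_1 ≤ x_2. Then f ∈ ℱ_m for every integer m ≥ 2. -/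
/-- The class `ℱ_m`: real functions on `[0,1]` with `max{f(0), f(1)} ≤ 0` such
that for all `x_1, …, x_m ∈ [0,1]` with `x_1` minimal and `x_m` maximal,
`f((x_1 + ⋯ + x_m)/m) ≤ (f(x_1) + ⋯ + f(x_m))/m + (x_m − x_1)`.
(The designated minimal and maximal entries are indexed by `i₀` and `i₁`.) -/
def memF (m : ℕ) (f : ℝ → ℝ) : Prop :=
  max (f 0) (f 1) ≤ 0 ∧
  ∀ x : Fin m → ℝ, (∀ i, x i ∈ Set.Icc (0 : ℝ) 1) →
    ∀ i₀ i₁ : Fin m, (∀ i, x i₀ ≤ x i) → (∀ i, x i ≤ x i₁) →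
      f ((∑ i, x i) / m) ≤ (∑ i, f (x i)) / m + (x i₁ - x i₀)

/-- `F_m(x) = sup{f(x) : f ∈ ℱ_m}`, the pointwise supremum of the class `ℱ_m`. -/
noncomputable def bigF (m : ℕ) (x : ℝ) : ℝ :=
  sSup {y : ℝ | ∃ f : ℝ → ℝ, memF m f ∧ f x = y}

theorem stmt15 {f : ℝ → ℝ} (hconc : ConcaveOn ℝ (Set.Icc (0 : ℝ) 1) f)
    (hb : max (f 0) (f 1) ≤ 0)
    (hineq : ∀ lam x₁ x₂ : ℝ, lam ∈ Set.Icc (0 : ℝ) 1 →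
      x₁ ∈ Set.Icc (0 : ℝ) 1 → x₂ ∈ Set.Icc (0 : ℝ) 1 → x₁ ≤ x₂ →
      f (lam * x₁ + (1 - lam) * x₂)
        ≤ lam * f x₁ + (1 - lam) * f x₂ + (x₂ - x₁))
    {m : ℕ} (hm : 2 ≤ m) :
    memF m f := by

  refine ⟨hb, ?_⟩
  intro x hx i₀ i₁ h₀ h₁
  set a := x i₀ with ha'
  set b := x i₁ with hb'
  have hab : a ≤ b := h₀ i₁
  have hm0 : (0:ℝ) < m := by positivity
  have hmne : (m:ℝ) ≠ 0 := ne_of_gt hm0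
  rcases eq_or_lt_of_le hab with heq | hlt
  · have hall : ∀ i, x i = a := fun i => le_antisymm (heq ▸ h₁ i) (h₀ i)
    have hsum : ∑ i, x i = m * a := by
      simp [hall, Finset.sum_const, Finset.card_univ, mul_comm]
    have hsumf : ∑ i, f (x i) = m * f a := by
      simp [hall, Finset.sum_const, Finset.card_univ, mul_comm]
    rw [hsum, hsumf, mul_div_cancel_left₀ _ hmne, mul_div_cancel_left₀ _ hmne, ← heq]
    simp
  · have hd : (0:ℝ) < b - a := sub_pos.2 hlt
    set t : Fin m → ℝ := fun i => (b - x i) / (b - a) with ht'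
    have hti : ∀ i, t i ∈ Set.Icc (0:ℝ) 1 := by
      intro i
      constructor
      · apply div_nonneg _ hd.le; linarith [h₁ i]
      · rw [div_le_one hd]; linarith [h₀ i]
    have hxi : ∀ i, x i = t i * a + (1 - t i) * b := by
      intro i
      have hne := hd.ne'
      rw [ht']
      show x i = (b - x i) / (b - a) * a + (1 - (b - x i) / (b - a)) * b
      rw [eq_comm, div_mul_eq_mul_div, one_sub_div hne, div_mul_eq_mul_div,
        ← add_div, div_eq_iff hne]
      ring
    have hfi : ∀ i, t i * f a + (1 - t i) * f b ≤ f (x i) := by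
      intro i
      have hcc := hconc.2 (hx i₀) (hx i₁) (hti i).1 (sub_nonneg.2 (hti i).2) (by ring)
      simp only [smul_eq_mul] at hcc
      rw [← ha', ← hb', ← hxi i] at hcc
      exact hcc
    set lam := (∑ i, t i) / m with hlam'
    have hsumt : ∀ i ∈ Finset.univ, (0:ℝ) ≤ t i := fun i _ => (hti i).1
    have hlam : lam ∈ Set.Icc (0:ℝ) 1 := by
      constructor
      · exact div_nonneg (Finset.sum_nonneg hsumt) hm0.le
      · rw [div_le_one hm0]
        calc ∑ i, t i ≤ ∑ _i : Fin m, (1:ℝ) := Finset.sum_le_sum (fun i _ => (hti i).2)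
          _ = m := by simp
    have hsumx : ∑ i, x i = (∑ i, t i) * a + ((m : ℝ) - ∑ i, t i) * b := by
      calc ∑ i, x i = ∑ i, (t i * a + (1 - t i) * b) := Finset.sum_congr rfl (fun i _ => hxi i)
        _ = (∑ i, t i) * a + ((m : ℝ) - ∑ i, t i) * b := by
            rw [Finset.sum_add_distrib, ← Finset.sum_mul, ← Finset.sum_mul]
            simp [Finset.sum_sub_distrib]
    have hmean : (∑ i, x i) / m = lam * a + (1 - lam) * b := by
      rw [hsumx, hlam']; field_simp; try ring
    have hsumf : lam * f a + (1 - lam) * f b ≤ (∑ i, f (x i)) / m := by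
      rw [le_div_iff₀ hm0]
      calc (lam * f a + (1 - lam) * f b) * m
          = (∑ i, t i) * f a + ((m : ℝ) - ∑ i, t i) * f b := by
            rw [hlam']; field_simp; try ring
        _ = ∑ i, (t i * f a + (1 - t i) * f b) := by
            rw [Finset.sum_add_distrib, ← Finset.sum_mul, ← Finset.sum_mul]
            simp [Finset.sum_sub_distrib]
        _ ≤ ∑ i, f (x i) := Finset.sum_le_sum (fun i _ => hfi i)
    have key := hineq lam a b hlam (hx i₀) (hx i₁) hab
    rw [hmean]
    linarith
end

section
/- For every real x ∈ (0,1], one has x·log_3(1/x) ≤ ω_3(x) ≤ x·log_3(3/(2x)). -/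
namespace S19


noncomputable def F (y : ℝ) : ℝ := min (nearestIntDist y) (1/3)

lemma F_nonneg (y : ℝ) : 0 ≤ F y := le_min (abs_nonneg _) (by norm_num)

lemma F_le (y : ℝ) : F y ≤ 1/3 := min_le_right _ _

lemma F_add_int (y : ℝ) (n : ℤ) : F (y + n) = F y := by
  unfold F nearestIntDist
  rw [round_add_intCast]
  push_cast
  ring_nf

lemma F_le_half {y : ℝ} (h0 : 0 ≤ y) (h1 : y ≤ 1/2) : F y = min y (1/3) := by
  rcases lt_or_eq_of_le h1 with h | h
  · have hr : round y = 0 := by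
      rw [round_eq, Int.floor_eq_zero_iff]
      constructor
      · simpa using by linarith
      · simpa using by linarith
    unfold F nearestIntDist
    rw [hr]
    simp [abs_of_nonneg h0]
  · subst h
    have hr : round (1/2 : ℝ) = 1 := by norm_num [round_eq]
    unfold F nearestIntDist
    rw [hr]
    norm_num [abs_of_nonpos]
    
lemma F_ge_half {y : ℝ} (h0 : 1/2 ≤ y) (h1 : y ≤ 1) : F y = min (1-y) (1/3) := by
  have hr : round y = 1 := by
    rw [round_eq]
    have : (1:ℤ) ≤ ⌊y + 1/2⌋ := by
      apply Int.le_floor.2; push_cast; linarith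
    have h2 : ⌊y + 1/2⌋ < 2 := by
      apply Int.floor_lt.2; push_cast; linarith
    omega
  unfold F nearestIntDist
  rw [hr]
  push_cast
  have : |y - (1:ℝ)| = 1 - y := by rw [abs_of_nonpos (by linarith)]; ring
  rw [this]


noncomputable def S (N : ℕ) (x : ℝ) : ℝ :=
  ∑ k ∈ Finset.range N, ((3:ℝ)^k)⁻¹ * F ((3:ℝ)^k * x)

lemma S_zero (x : ℝ) : S 0 x = 0 := by simp [S]



lemma term_succ (x : ℝ) (k : ℕ) :
    ((3:ℝ)^(k+1))⁻¹ * F ((3:ℝ)^(k+1) * x) = (1/3) * (((3:ℝ)^k)⁻¹ * F ((3:ℝ)^k * (3*x))) := by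
  rw [show (3:ℝ)^(k+1) * x = 3^k * (3*x) by ring, pow_succ, mul_inv]
  ring

lemma S_succ (N : ℕ) (x : ℝ) : S (N+1) x = F x + (1/3) * S N (3*x) := by
  unfold S
  rw [Finset.sum_range_succ']
  simp only [pow_zero, inv_one, one_mul]
  rw [Finset.mul_sum]
  rw [add_comm]
  congr 1
  exact Finset.sum_congr rfl (fun k _ => term_succ x k)

lemma S_int_shift (N : ℕ) (x : ℝ) (n : ℤ) : S N (x + n) = S N x := by
  unfold S
  refine Finset.sum_congr rfl (fun k _ => ?_)
  have h : (3:ℝ)^k * (x + n) = 3^k * x + ((3^k * n : ℤ) : ℝ) := by push_cast; ring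
  rw [h, F_add_int]

lemma S_le_half (N : ℕ) (x : ℝ) : S N x ≤ 1/2 := by
  induction N generalizing x with
  | zero => simp [S_zero]
  | succ N ih =>
    rw [S_succ]
    have := F_le x
    have := ih (3*x)
    linarith

lemma S_nonneg (N : ℕ) (x : ℝ) : 0 ≤ S N x := by
  apply Finset.sum_nonneg
  intro k _
  exact mul_nonneg (by positivity) (F_nonneg _)

lemma claimC (N : ℕ) : ∀ y : ℝ, 0 ≤ y → y ≤ 1 → S N y ≤ 1/4 + min y (1-y) / 2 := by
  induction N with
  | zero =>
    intro y h0 h1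
    have : (0:ℝ) ≤ min y (1-y) := le_min h0 (by linarith)
    rw [S_zero]; linarith
  | succ N ih =>
    intro y h0 h1
    rw [S_succ]
    rcases le_or_gt y (1/6) with hc | hc
    · -- A : F y = y, crude tail
      have hF : F y = y := by rw [F_le_half h0 (by linarith)]; exact min_eq_left (by linarith)
      have hS := S_le_half N (3*y)
      have hmin : min y (1-y) = y := min_eq_left (by linarith)
      rw [hF, hmin]; linarith
    rcases le_or_gt y (1/3) with hc2 | hc2
    · -- B
      have hF : F y = y := by rw [F_le_half h0 (by linarith)]; exact min_eq_left (by linarith)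
      have hS := ih (3*y) (by linarith) (by linarith)
      have h2 : min (3*y) (1-3*y) ≤ 1 - 3*y := min_le_right _ _
      have hmin : min y (1-y) = y := min_eq_left (by linarith)
      rw [hF, hmin]; linarith
    rcases le_or_gt y (1/2) with hc3 | hc3
    · -- C : y ∈ (1/3,1/2]
      have hF : F y = 1/3 := by rw [F_le_half h0 hc3]; exact min_eq_right (by linarith)
      have hsh : S N (3*y) = S N (3*y - 1) := by
        have := S_int_shift N (3*y - 1) 1
        push_cast at this
        rw [show (3*y - 1) + 1 = 3*y by ring] at this
        exact this
      have hS := ih (3*y - 1) (by linarith) (by linarith)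
      have h2 : min (3*y-1) (1-(3*y-1)) ≤ 3*y - 1 := min_le_left _ _
      have hmin : min y (1-y) = y := min_eq_left (by linarith)
      rw [hF, hmin, hsh]; linarith
    rcases le_or_gt y (2/3) with hc4 | hc4
    · -- D : y ∈ (1/2,2/3]
      have hF : F y = 1/3 := by rw [F_ge_half (by linarith) h1]; exact min_eq_right (by linarith)
      have hsh : S N (3*y) = S N (3*y - 1) := by
        have := S_int_shift N (3*y - 1) 1
        push_cast at this
        rw [show (3*y - 1) + 1 = 3*y by ring] at this
        exact this
      have hS := ih (3*y - 1) (by linarith) (by linarith)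
      have h2 : min (3*y-1) (1-(3*y-1)) ≤ 1-(3*y-1) := min_le_right _ _
      have hmin : min y (1-y) = 1-y := min_eq_right (by linarith)
      rw [hF, hmin, hsh]; linarith
    rcases le_or_gt y (5/6) with hc5 | hc5
    · -- E : y ∈ (2/3,5/6]
      have hF : F y = 1-y := by rw [F_ge_half (by linarith) h1]; exact min_eq_left (by linarith)
      have hsh : S N (3*y) = S N (3*y - 2) := by
        have := S_int_shift N (3*y - 2) 2
        push_cast at this
        rw [show (3*y - 2) + 2 = 3*y by ring] at this
        exact this
      have hS := ih (3*y - 2) (by linarith) (by linarith)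
      have h2 : min (3*y-2) (1-(3*y-2)) ≤ 3*y-2 := min_le_left _ _
      have hmin : min y (1-y) = 1-y := min_eq_right (by linarith)
      rw [hF, hmin, hsh]; linarith
    · -- f : y ∈ (5/6,1]
      have hF : F y = 1-y := by rw [F_ge_half (by linarith) h1]; exact min_eq_left (by linarith)
      have hsh : S N (3*y) = S N (3*y - 2) := by
        have := S_int_shift N (3*y - 2) 2
        push_cast at this
        rw [show (3*y - 2) + 2 = 3*y by ring] at this
        exact this
      have hS := ih (3*y - 2) (by linarith) (by linarith)
      have h2 : min (3*y-2) (1-(3*y-2)) ≤ 1-(3*y-2) := min_le_right _ _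
      have hmin : min y (1-y) = 1-y := min_eq_right (by linarith)
      rw [hF, hmin, hsh]; linarith


noncomputable def W (x : ℝ) : ℝ := ∑' k : ℕ, ((3:ℝ)^k)⁻¹ * F ((3:ℝ)^k * x)

lemma summable_W (x : ℝ) : Summable (fun k : ℕ => ((3:ℝ)^k)⁻¹ * F ((3:ℝ)^k * x)) := by
  have h1 : ∀ k : ℕ, 0 ≤ ((3:ℝ)^k)⁻¹ * F ((3:ℝ)^k * x) :=
    fun k => mul_nonneg (by positivity) (F_nonneg _)
  have h2 : ∀ k : ℕ, ((3:ℝ)^k)⁻¹ * F ((3:ℝ)^k * x) ≤ (1/3:ℝ)^k * (1/3) := by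
    intro k
    calc ((3:ℝ)^k)⁻¹ * F ((3:ℝ)^k * x) ≤ ((3:ℝ)^k)⁻¹ * (1/3) :=
          mul_le_mul_of_nonneg_left (F_le _) (by positivity)
      _ = (1/3 : ℝ)^k * (1/3) := by rw [one_div, inv_pow]
  have h3 : Summable (fun k : ℕ => (1/3:ℝ)^k * (1/3)) :=
    (summable_geometric_of_lt_one (by norm_num) (by norm_num)).mul_right _
  exact Summable.of_nonneg_of_le h1 h2 h3

lemma omegaT_eq (x : ℝ) : omegaT 3 x = W x := by
  unfold omegaT W F
  norm_num

lemma S_le_W (N : ℕ) (x : ℝ) : S N x ≤ W x := by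
  exact Summable.sum_le_tsum _ (fun k _ => mul_nonneg (by positivity) (F_nonneg _)) (summable_W x)

lemma W_le (x B : ℝ) (h : ∀ N, S N x ≤ B) : W x ≤ B := by
  apply Real.tsum_le_of_sum_range_le (fun k => mul_nonneg (by positivity) (F_nonneg _)) h

lemma W_claim (z : ℝ) (k : ℤ) (h1 : (k:ℝ) ≤ z) (h2 : z ≤ (k:ℝ) + 1) :
    W z ≤ 1/4 + min (z - k) (1 - (z - k)) / 2 := by
  apply W_le
  intro N
  have hsh : S N z = S N (z - k) := by
    have := S_int_shift N (z - (k:ℝ)) k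
    rw [show (z - (k:ℝ)) + (k:ℝ) = z by ring] at this
    exact this
  rw [hsh]
  exact claimC N (z - k) (by linarith) (by linarith)

lemma W_rec (x : ℝ) : W x = F x + (1/3) * W (3*x) := by
  unfold W
  rw [Summable.tsum_eq_zero_add (summable_W x)]
  simp only [pow_zero, inv_one, one_mul]
  congr 1
  rw [tsum_congr (fun k => term_succ x k), tsum_mul_left]



lemma log3_pos : 0 < Real.log 3 := Real.log_pos (by norm_num)

lemma log3_lt : Real.log 3 < 1.1037 := by
  have he := Real.exp_one_gt_d9   -- 2.7182818283 < exp 1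
  have hepos : (0:ℝ) < Real.exp 1 := Real.exp_pos 1
  have h1 : Real.log (3 / Real.exp 1) ≤ 3 / Real.exp 1 - 1 :=
    Real.log_le_sub_one_of_pos (by positivity)
  have h2 : Real.log (3 / Real.exp 1) = Real.log 3 - 1 := by
    rw [Real.log_div (by norm_num) (Real.exp_ne_zero 1), Real.log_exp]
  have h3 : 3 / Real.exp 1 < 3 / 2.7182818283 := by
    apply div_lt_div_of_pos_left (by norm_num) (by norm_num) he
  have : (3:ℝ) / 2.7182818283 < 1.1037 := by norm_num
  linarith

lemma log3_gt : 1.0939 < Real.log 3 := by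
  have he := Real.exp_one_lt_d9   -- exp 1 < 2.7182818286
  have h1 : Real.log (Real.exp 1 / 3) ≤ Real.exp 1 / 3 - 1 :=
    Real.log_le_sub_one_of_pos (by positivity)
  have h2 : Real.log (Real.exp 1 / 3) = 1 - Real.log 3 := by
    rw [Real.log_div (Real.exp_ne_zero 1) (by norm_num), Real.log_exp]
  have h3 : Real.exp 1 / 3 < 2.7182818286 / 3 := by linarith
  have : (2.7182818286:ℝ) / 3 < 0.9061 := by norm_num
  linarith

-- scalar 1 : u ∈ (2/3, 1]
lemma sc1 {u : ℝ} (h1 : 2/3 < u) (h2 : u ≤ 1) : 2*u*Real.log u ≤ (u-1)*Real.log 3 := by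
  have hlog : Real.log u ≤ u - 1 := Real.log_le_sub_one_of_pos (by linarith)
  have hl3 := log3_lt
  have hmul : 2*u*Real.log u ≤ 2*u*(u-1) :=
    mul_le_mul_of_nonneg_left hlog (by linarith)
  nlinarith [mul_nonneg (show (0:ℝ) ≤ 1 - u by linarith) (show (0:ℝ) ≤ 2*u - Real.log 3 by linarith)]

-- scalar 2 : u ∈ (1, 4/3]
lemma sc2 {u : ℝ} (h1 : 1 < u) (h2 : u ≤ 4/3) : 2*u*Real.log u ≤ 3*(u-1)*Real.log 3 := by
  have hlog : Real.log u ≤ u - 1 := Real.log_le_sub_one_of_pos (by linarith)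
  have hl3 := log3_gt
  have hmul : 2*u*Real.log u ≤ 2*u*(u-1) :=
    mul_le_mul_of_nonneg_left hlog (by linarith)
  nlinarith [mul_nonneg (show (0:ℝ) ≤ u - 1 by linarith) (show (0:ℝ) ≤ 3*Real.log 3 - 2*u by linarith)]

-- scalar 3 : u ∈ (4/3, 5/3]
lemma sc3 {u : ℝ} (h1 : 4/3 < u) (h2 : u ≤ 5/3) : 2*u*Real.log u ≤ 3*(u-1)*Real.log 3 := by
  have hl2a := Real.log_two_gt_d9
  have hl2b := Real.log_two_lt_d9
  have hl3a := log3_gt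
  have hl3b := log3_lt
  have hlog0 : Real.log (u / (3/2)) ≤ u / (3/2) - 1 := Real.log_le_sub_one_of_pos (by positivity)
  have heq : Real.log (u / (3/2)) = Real.log u - (Real.log 3 - Real.log 2) := by
    rw [Real.log_div (by linarith) (by norm_num), Real.log_div (by norm_num) (by norm_num)]
  have hlog : Real.log u ≤ 2*u/3 - 1 + Real.log 3 - Real.log 2 := by
    rw [heq] at hlog0; linarith
  have hmul : 2*u*Real.log u ≤ 2*u*(2*u/3 - 1 + Real.log 3 - Real.log 2) :=
    mul_le_mul_of_nonneg_left hlog (by linarith)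
  nlinarith [mul_nonneg (show (0:ℝ) ≤ u - 4/3 by linarith) (show (0:ℝ) ≤ 5/3 - u by linarith)]

-- scalar 4 : u ∈ (5/3, 2]
lemma sc4 {u : ℝ} (h1 : 5/3 < u) (h2 : u ≤ 2) : 6*u*Real.log u ≤ (15*u-19)*Real.log 3 := by
  have hl2a := Real.log_two_gt_d9
  have hl2b := Real.log_two_lt_d9
  have hl3a := log3_gt
  have hl3b := log3_lt
  have hlog0 : Real.log (u / 2) ≤ u / 2 - 1 := Real.log_le_sub_one_of_pos (by positivity)
  have heq : Real.log (u / 2) = Real.log u - Real.log 2 := by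
    rw [Real.log_div (by linarith) (by norm_num)]
  have hlog : Real.log u ≤ u/2 - 1 + Real.log 2 := by rw [heq] at hlog0; linarith
  have hmul : 6*u*Real.log u ≤ 6*u*(u/2 - 1 + Real.log 2) :=
    mul_le_mul_of_nonneg_left hlog (by linarith)
  nlinarith [mul_nonneg (show (0:ℝ) ≤ u - 5/3 by linarith) (show (0:ℝ) ≤ 2 - u by linarith)]

-- scalar 5 : x ∈ (4/9, 5/9] : x * log (1/x) ≤ 4/9 * log 3
lemma sc5 {x : ℝ} (h1 : 4/9 < x) (h2 : x ≤ 5/9) : x * Real.log (1/x) ≤ 4/9 * Real.log 3 := by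
  have hl3a := log3_gt
  have hepos : (0:ℝ) < Real.exp 1 := Real.exp_pos 1
  have he := Real.exp_one_gt_d9
  have hx0 : (0:ℝ) < x := by linarith
  have hlog0 : Real.log (1 / (Real.exp 1 * x)) ≤ 1/(Real.exp 1 * x) - 1 :=
    Real.log_le_sub_one_of_pos (by positivity)
  have heq : Real.log (1 / (Real.exp 1 * x)) = Real.log (1/x) - 1 := by
    rw [one_div, mul_inv, Real.log_mul (by positivity) (by positivity),
      Real.log_inv, Real.log_exp, one_div, Real.log_inv]
    ring
  have hlog : Real.log (1/x) ≤ 1/(Real.exp 1 * x) := by rw [heq] at hlog0; linarith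
  have hmul : x * Real.log (1/x) ≤ x * (1/(Real.exp 1 * x)) :=
    mul_le_mul_of_nonneg_left hlog (by linarith)
  have hxe : x * (1/(Real.exp 1 * x)) = 1 / Real.exp 1 := by field_simp
  have hee : 1 / Real.exp 1 < 1 / 2.7182818283 := by
    apply div_lt_div_of_pos_left (by norm_num) (by norm_num) he
  have h9 : (1:ℝ) / 2.7182818283 < 4/9 * 1.0939 := by norm_num
  have : 4/9 * 1.0939 ≤ 4/9 * Real.log 3 := by nlinarith
  linarith [hmul, hxe ▸ hmul]


lemma F_shift (z : ℝ) (n : ℤ) : F (z - n) = F z := by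
  have h := F_add_int (z - (n:ℝ)) n
  rw [show (z - (n:ℝ)) + (n:ℤ) = z by push_cast; ring] at h
  exact h.symm

lemma S_two (x : ℝ) : S 2 x = F x + (1/3) * F (3*x) := by
  rw [S_succ, S_succ, S_zero]
  ring

lemma S_one (x : ℝ) : S 1 x = F x := by
  rw [S_succ, S_zero]; ring

lemma base {x : ℝ} (h1 : 1/3 < x) (h2 : x ≤ 1) :
    x * Real.logb 3 (1/x) ≤ W x ∧ W x ≤ x * Real.logb 3 (3/(2*x)) := by
  have hx0 : (0:ℝ) < x := by linarith
  have l3p := log3_pos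
  constructor
  · -- lower bound
    simp only [Real.logb]
    rcases le_or_gt x (4/9) with hc | hc
    · -- (1/3, 4/9]
      have hFx : F x = 1/3 := by
        rw [F_le_half (le_of_lt hx0) (by linarith)]; exact min_eq_right (by linarith)
      have hF3 : F (3*x) = 3*x - 1 := by
        rw [← F_shift (3*x) 1]
        push_cast
        rw [F_le_half (by linarith) (by linarith)]
        exact min_eq_left (by linarith)
      have hS : S 2 x = x := by rw [S_two, hFx, hF3]; ring
      have hWx : x ≤ W x := le_trans (le_of_eq hS.symm) (S_le_W 2 x)
      have hlog : Real.log (1/x) ≤ Real.log 3 := by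
        apply Real.log_le_log (by positivity)
        rw [div_le_iff₀ hx0]; linarith
      have hstep : x * (Real.log (1/x)/Real.log 3) ≤ x * 1 :=
        mul_le_mul_of_nonneg_left ((div_le_one l3p).2 hlog) (le_of_lt hx0)
      linarith
    rcases le_or_gt x (5/9) with hc2 | hc2
    · -- (4/9, 5/9]
      have hFx : F x = 1/3 := by
        rcases le_or_gt x (1/2) with h | h
        · rw [F_le_half (le_of_lt hx0) h]; exact min_eq_right (by linarith)
        · rw [F_ge_half (le_of_lt h) h2]; exact min_eq_right (by linarith)
      have hF3 : F (3*x) = 1/3 := by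
        rw [← F_shift (3*x) 1]
        push_cast
        rcases le_or_gt (3*x-1) (1/2) with h | h
        · rw [F_le_half (by linarith) h]; exact min_eq_right (by linarith)
        · rw [F_ge_half (le_of_lt h) (by linarith)]; exact min_eq_right (by linarith)
      have hS : S 2 x = 4/9 := by rw [S_two, hFx, hF3]; ring
      have hWx : (4:ℝ)/9 ≤ W x := le_trans (le_of_eq hS.symm) (S_le_W 2 x)
      have h5 := sc5 hc hc2
      have heq : x * (Real.log (1/x) / Real.log 3) = (x * Real.log (1/x)) / Real.log 3 := by
        ring
      rw [heq]
      have : (x * Real.log (1/x)) / Real.log 3 ≤ 4/9 := by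
        rw [div_le_iff₀ l3p]; linarith
      linarith
    · -- (5/9, 1]
      have hxl : x * Real.log (1/x) ≤ 1 - x := by
        have hlog : Real.log (1/x) ≤ 1/x - 1 :=
          Real.log_le_sub_one_of_pos (by positivity)
        have hm : x * Real.log (1/x) ≤ x * (1/x - 1) :=
          mul_le_mul_of_nonneg_left hlog (le_of_lt hx0)
        have : x * (1/x - 1) = 1 - x := by field_simp
        linarith
      have hdiv : x * (Real.log (1/x)/Real.log 3) ≤ 1 - x := by
        have heq : x * (Real.log (1/x) / Real.log 3) = (x * Real.log (1/x)) / Real.log 3 := by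
          ring
        rw [heq, div_le_iff₀ l3p]
        nlinarith [log3_gt]
      rcases le_or_gt x (2/3) with hc3 | hc3
      · have hFx : F x = 1/3 := by
          rw [F_ge_half (by linarith) h2]; exact min_eq_right (by linarith)
        have hF3 : F (3*x) = 2 - 3*x := by
          rw [← F_shift (3*x) 1]
          push_cast
          rw [F_ge_half (by linarith) (by linarith)]
          rw [show (1:ℝ) - (3*x - 1) = 2 - 3*x by ring]
          exact min_eq_left (by linarith)
        have hS : S 2 x = 1 - x := by rw [S_two, hFx, hF3]; ring
        have hWx : 1 - x ≤ W x := le_trans (le_of_eq hS.symm) (S_le_W 2 x)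
        linarith
      · have hFx : F x = 1 - x := by
          rw [F_ge_half (by linarith) h2]; exact min_eq_left (by linarith)
        have hS : S 1 x = 1 - x := by rw [S_one, hFx]
        have hWx : 1 - x ≤ W x := le_trans (le_of_eq hS.symm) (S_le_W 1 x)
        linarith
  · -- upper bound
    simp only [Real.logb]
    have hlogdiv : Real.log (3/(2*x)) = Real.log 3 - Real.log (2*x) :=
      Real.log_div (by norm_num) (by positivity)
    have htarget : x * (Real.log (3/(2*x)) / Real.log 3)
        = x - (x * Real.log (2*x))/Real.log 3 := by
      rw [hlogdiv]; field_simp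
    rw [htarget, W_rec x]
    rcases le_or_gt x (1/2) with hc | hc
    · -- (1/3, 1/2]
      have hFx : F x = 1/3 := by
        rw [F_le_half (le_of_lt hx0) hc]; exact min_eq_right (by linarith)
      have hW3 := W_claim (3*x) 1 (by push_cast; linarith) (by push_cast; linarith)
      push_cast at hW3
      have hmin : min (3*x - 1) (1 - (3*x - 1)) ≤ 3*x - 1 := min_le_left _ _
      have hsc := sc1 (show 2/3 < 2*x by linarith) (show 2*x ≤ 1 by linarith)
      have hdiv : (x * Real.log (2*x))/Real.log 3 ≤ x/2 - 1/4 := by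
        rw [div_le_iff₀ l3p]; nlinarith
      rw [hFx]
      linarith
    rcases le_or_gt x (2/3) with hc2 | hc2
    · -- (1/2, 2/3]
      have hFx : F x = 1/3 := by
        rw [F_ge_half (le_of_lt hc) h2]; exact min_eq_right (by linarith)
      have hW3 := W_claim (3*x) 1 (by push_cast; linarith) (by push_cast; linarith)
      push_cast at hW3
      have hmin : min (3*x - 1) (1 - (3*x - 1)) ≤ 1 - (3*x - 1) := min_le_right _ _
      have hsc := sc2 (show 1 < 2*x by linarith) (show 2*x ≤ 4/3 by linarith)
      have hdiv : (x * Real.log (2*x))/Real.log 3 ≤ 3*x/2 - 3/4 := by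
        rw [div_le_iff₀ l3p]; nlinarith
      rw [hFx]
      linarith
    rcases le_or_gt x (5/6) with hc3 | hc3
    · -- (2/3, 5/6]
      have hFx : F x = 1 - x := by
        rw [F_ge_half (by linarith) h2]; exact min_eq_left (by linarith)
      have hW3 := W_claim (3*x) 2 (by push_cast; linarith) (by push_cast; linarith)
      push_cast at hW3
      have hmin : min (3*x - 2) (1 - (3*x - 2)) ≤ 3*x - 2 := min_le_left _ _
      have hsc := sc3 (show 4/3 < 2*x by linarith) (show 2*x ≤ 5/3 by linarith)
      have hdiv : (x * Real.log (2*x))/Real.log 3 ≤ 3*x/2 - 3/4 := by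
        rw [div_le_iff₀ l3p]; nlinarith
      rw [hFx]
      linarith
    · -- (5/6, 1]
      have hFx : F x = 1 - x := by
        rw [F_ge_half (by linarith) h2]; exact min_eq_left (by linarith)
      have hW3 := W_claim (3*x) 2 (by push_cast; linarith) (by push_cast; linarith)
      push_cast at hW3
      have hmin : min (3*x - 2) (1 - (3*x - 2)) ≤ 1 - (3*x - 2) := min_le_right _ _
      have hsc := sc4 (show 5/3 < 2*x by linarith) (show 2*x ≤ 2 by linarith)
      have hdiv : (x * Real.log (2*x))/Real.log 3 ≤ 5*x/2 - 19/12 := by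
        rw [div_le_iff₀ l3p]; nlinarith
      rw [hFx]
      linarith

lemma main : ∀ n : ℕ, ∀ x : ℝ, (1/3:ℝ)^(n+1) < x → x ≤ 1 →
    x * Real.logb 3 (1/x) ≤ W x ∧ W x ≤ x * Real.logb 3 (3/(2*x)) := by
  intro n
  induction n with
  | zero =>
    intro x hl h2
    rw [pow_one] at hl
    exact base hl h2
  | succ n ih =>
    intro x hl h2
    rcases lt_or_ge (1/3 : ℝ) x with hc | hc
    · exact base hc h2
    · have hx0 : (0:ℝ) < x := lt_trans (by positivity) hl
      have h3x : (1/3:ℝ)^(n+1) < 3*x := by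
        have h33 : (3:ℝ) * (1/3)^(n+1+1) = (1/3)^(n+1) := by
          rw [pow_succ]; ring
        nlinarith
      have ih3 := ih (3*x) h3x (by linarith)
      have hFx : F x = x := by
        rw [F_le_half (le_of_lt hx0) (by linarith)]; exact min_eq_left (by linarith)
      have hrec : W x = x + (1/3) * W (3*x) := by rw [W_rec x, hFx]
      have l3p := log3_pos
      have hl3ne : Real.log 3 ≠ 0 := ne_of_gt l3p
      constructor
      · have hlogeq : Real.log (1/x) = Real.log 3 + Real.log (1/(3*x)) := by
          rw [show (1:ℝ)/x = 3 * (1/(3*x)) by field_simp, Real.log_mul (by norm_num) (by positivity)]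
        simp only [Real.logb] at ih3 ⊢
        rw [hrec, hlogeq]
        have hexp : x * ((Real.log 3 + Real.log (1/(3*x)))/Real.log 3)
            = x + (1/3) * (3*x * (Real.log (1/(3*x))/Real.log 3)) := by
          field_simp
        rw [hexp]
        linarith [ih3.1]
      · have hlogeq : Real.log (3/(2*x)) = Real.log 3 + Real.log (3/(2*(3*x))) := by
          rw [show (3:ℝ)/(2*x) = 3 * (3/(2*(3*x))) by field_simp,
            Real.log_mul (by norm_num) (by positivity)]
        simp only [Real.logb] at ih3 ⊢
        rw [hrec, hlogeq]
        have hexp : x * ((Real.log 3 + Real.log (3/(2*(3*x))))/Real.log 3)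
            = x + (1/3) * (3*x * (Real.log (3/(2*(3*x)))/Real.log 3)) := by
          field_simp
        rw [hexp]
        linarith [ih3.2]


end S19

theorem stmt19 {x : ℝ} (hx : x ∈ Set.Ioc (0 : ℝ) 1) :
    x * Real.logb 3 (1 / x) ≤ omegaT 3 x ∧
    omegaT 3 x ≤ x * Real.logb 3 (3 / (2 * x)) := by
  obtain ⟨hx0, hx1⟩ := hx
  obtain ⟨n, hn⟩ := exists_pow_lt_of_lt_one hx0 (show (1/3:ℝ) < 1 by norm_num)
  have h : (1/3:ℝ)^(n+1) < x := by
    have hle : (1/3:ℝ)^(n+1) ≤ (1/3)^n :=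
      pow_le_pow_of_le_one (by norm_num) (by norm_num) (by omega)
    linarith
  rw [S19.omegaT_eq]
  exact S19.main n x h hx1
end
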